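/- arXiv:2005.09709 — 7 statements merged into one kernel-verified Lean document; each statement's English description precedes it below -/
import Mathlib

section
/- Let A and B be closed subsets of a Banach space X and let x̄ ∈ A ∩ B. Then A and B are transversal at x̄ if and only if there exist δ > 0 and κ̂ > 0 such that for all a, b ∈ X with ‖a‖ ≤ δ and ‖b‖ ≤ δ, and all x ∈ (A − a) ∩ B_δ(x̄) and y ∈ (B − b) ∩ B_δ(x̄) with x ≠ y, the slope satisfies |∇φ_{a,b}|(x, y) = limsup_{(u,v)→(x,y)} max{φ_{a,b}(x,y) − φ_{a,b}(u,v), 0} / ‖(x,y) − (u,v)‖ ≥ κ̂, where φ_{a,b} denotes the coupling function of the sets A − a and B − b. -/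
open Metric Set
open scoped ENNReal

/-- Transversality of closed sets `A`, `B` at a point `x0 ∈ A ∩ B`: the subtransversality
inequality holds uniformly for all small translations of both sets. -/
def Transversal {X : Type*} [NormedAddCommGroup X] (A B : Set X) (x0 : X) : Prop :=
  ∃ K > 0, ∃ δ > 0, ∀ a ∈ Metric.ball (0 : X) δ, ∀ b ∈ Metric.ball (0 : X) δ,
    ∀ x ∈ Metric.ball x0 δ,
      EMetric.infEdist x (((· - a) '' A) ∩ ((· - b) '' B)) ≤
        ENNReal.ofReal K *
          (EMetric.infEdist x ((· - a) '' A) + EMetric.infEdist x ((· - b) '' B))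

/-- `setInd S x` is `0` if `x ∈ S` and `+∞` otherwise (indicator in `ℝ≥0∞`). -/
noncomputable def setInd {X : Type*} (S : Set X) (x : X) : ℝ≥0∞ :=
  ⨅ (_ : x ∈ S), 0

/-- The coupling function `φ(x,y) = δ_A(x) + d(x,y) + δ_B(y)` of the sets `A` and `B`. -/
noncomputable def coupling {X : Type*} [MetricSpace X] (A B : Set X) (p : X × X) : ℝ≥0∞ :=
  setInd A p.1 + ENNReal.ofReal (dist p.1 p.2) + setInd B p.2

/-- The nonlocal slope `|∇φ|◇(x,y)` of the coupling function of `A` and `B`,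
with `X × X` carrying the sum metric. -/
noncomputable def couplingNLSlope {X : Type*} [MetricSpace X] (A B : Set X) (x y : X) : ℝ≥0∞ :=
  ⨆ (p : X × X) (_ : p ≠ (x, y)),
    (coupling A B (x, y) - coupling A B p) / ENNReal.ofReal (dist x p.1 + dist y p.2)

/-- The (local) slope `|∇φ|(x,y)` of the coupling function of `A` and `B`,
with `X × X` carrying the sum metric. -/
noncomputable def couplingSlope {X : Type*} [MetricSpace X] (A B : Set X) (x y : X) : ℝ≥0∞ :=
  Filter.limsup
    (fun p : X × X =>
      (coupling A B (x, y) - coupling A B p) / ENNReal.ofReal (dist x p.1 + dist y p.2))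
    (nhdsWithin (x, y) {q | q ≠ (x, y)})

section Helpers

open Filter Topology

lemma my_ekeland {Y : Type*} [MetricSpace Y] [CompleteSpace Y] {f : Y → ℝ}
    (hf : LowerSemicontinuous f) (hf0 : ∀ y, 0 ≤ f y) {α : ℝ} (hα : 0 < α) (x0 : Y) :
    ∃ y, f y + α * dist x0 y ≤ f x0 ∧ ∀ p, f y ≤ f p + α * dist y p := by
  set S : Y → Set Y := fun x => {p | f p + α * dist x p ≤ f x} with hS
  have hself : ∀ x, x ∈ S x := by intro x; simp [hS]
  have htrans : ∀ x p q, p ∈ S x → q ∈ S p → q ∈ S x := by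
    intro x p q hp hq
    simp only [hS, Set.mem_setOf_eq] at *
    have h1 : dist x q ≤ dist x p + dist p q := dist_triangle x p q
    nlinarith [hq, hp]
  have hbdd : ∀ x, BddBelow (f '' S x) := fun x => ⟨0, by rintro _ ⟨p, _, rfl⟩; exact hf0 p⟩
  have hchoice : ∀ (x : Y) (n : ℕ), ∃ p, p ∈ S x ∧ f p ≤ sInf (f '' S x) + (1/2)^n := by
    intro x n
    obtain ⟨a, ⟨p, hp, rfl⟩, ha⟩ := Real.lt_sInf_add_pos (Set.Nonempty.image f ⟨x, hself x⟩)
      (show (0:ℝ) < (1/2)^n by positivity)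
    exact ⟨p, hp, ha.le⟩
  choose g hg1 hg2 using hchoice
  set x : ℕ → Y := fun n => Nat.rec x0 (fun n xn => g xn n) n with hxdef
  have hxsucc : ∀ n, x (n+1) = g (x n) n := fun n => rfl
  have hmem : ∀ n, x (n+1) ∈ S (x n) := fun n => hg1 (x n) n
  have hchain : ∀ n m, n ≤ m → x m ∈ S (x n) := by
    intro n m hnm
    induction m, hnm using Nat.le_induction with
    | base => exact hself (x n)
    | succ m hm ih => exact htrans _ _ _ ih (hmem m)
  have hkey : ∀ n m, n ≤ m → f (x m) + α * dist (x n) (x m) ≤ f (x n) := fun n m h => hchain n m h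
  have hanti : ∀ n m, n ≤ m → f (x m) ≤ f (x n) := by
    intro n m h
    have := hkey n m h
    nlinarith [dist_nonneg (x := x n) (y := x m)]
  have hconv : ∃ L, Tendsto (fun n => f (x n)) atTop (𝓝 L) := by
    refine ⟨_, tendsto_atTop_ciInf (fun a b hab => hanti a b hab) ⟨0, ?_⟩⟩
    rintro _ ⟨n, rfl⟩; exact hf0 _
  obtain ⟨L, hL⟩ := hconv
  have hfc : CauchySeq (fun n => f (x n)) := hL.cauchySeq
  have hxc : CauchySeq x := by
    rw [Metric.cauchySeq_iff'] at hfc ⊢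
    intro ε hε
    obtain ⟨N, hN⟩ := hfc (α * ε) (by positivity)
    refine ⟨N, fun n hn => ?_⟩
    have h1 := hkey N n hn
    have h2 := hN n hn
    rw [Real.dist_eq, abs_lt] at h2
    have : dist (x N) (x n) < ε := by nlinarith
    rwa [dist_comm] at this
  obtain ⟨y, hy⟩ := cauchySeq_tendsto_of_complete hxc
  have hyS : ∀ n, y ∈ S (x n) := by
    intro n
    by_contra hyn
    simp only [hS, Set.mem_setOf_eq, not_le] at hyn
    have hlsc : LowerSemicontinuousAt (fun p => f p + α * dist (x n) p) y :=
      LowerSemicontinuousAt.add (hf y) (((continuous_const.mul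
        (continuous_const.dist continuous_id)).continuousAt).lowerSemicontinuousAt)
    have hev := (hy.eventually (hlsc (f (x n)) hyn))
    have hev2 : ∀ᶠ m in atTop, f (x m) + α * dist (x n) (x m) ≤ f (x n) :=
      eventually_atTop.mpr ⟨n, fun m hm => hkey n m hm⟩
    obtain ⟨m, h1, h2⟩ := (hev.and hev2).exists
    exact absurd h2 (not_le.mpr h1)
  refine ⟨y, hyS 0, ?_⟩
  intro p
  by_contra hp
  push_neg at hp
  have hpSy : p ∈ S y := le_of_lt hp
  have hfyfp : f y ≤ f p := by
    have key : ∀ n, f y ≤ f p + (1/2)^n := by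
      intro n
      have hpn : p ∈ S (x n) := htrans _ _ _ (hyS n) hpSy
      have h1 : sInf (f '' S (x n)) ≤ f p := csInf_le (hbdd (x n)) ⟨p, hpn, rfl⟩
      have h2 : f (x (n+1)) ≤ sInf (f '' S (x n)) + (1/2)^n := by
        rw [hxsucc]; exact hg2 (x n) n
      have h3 : f y + α * dist (x (n+1)) y ≤ f (x (n+1)) := hyS (n+1)
      nlinarith [dist_nonneg (x := x (n+1)) (y := y)]
    have : Tendsto (fun n : ℕ => f p + (1/2)^n) atTop (𝓝 (f p + 0)) :=
      tendsto_const_nhds.add (tendsto_pow_atTop_nhds_zero_of_lt_one (by norm_num) (by norm_num))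
    rw [add_zero] at this
    exact ge_of_tendsto' this key
  nlinarith [dist_nonneg (x := y) (y := p), hp]

lemma setInd_of_mem {X : Type*} {S : Set X} {x : X} (h : x ∈ S) : setInd S x = 0 := by
  simp [setInd, h]

lemma setInd_of_not_mem {X : Type*} {S : Set X} {x : X} (h : x ∉ S) : setInd S x = ⊤ := by
  simp [setInd, h]

lemma coupling_eq {X : Type*} [MetricSpace X] {A B : Set X} {x y : X} (hx : x ∈ A) (hy : y ∈ B) :
    coupling A B (x, y) = ENNReal.ofReal (dist x y) := by
  simp [coupling, setInd_of_mem hx, setInd_of_mem hy]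

lemma coupling_finite {X : Type*} [MetricSpace X] {A B : Set X} {p : X × X}
    (h : coupling A B p ≠ ⊤) : p.1 ∈ A ∧ p.2 ∈ B := by
  constructor
  · by_contra hc
    exact h (by simp [coupling, setInd_of_not_mem hc])
  · by_contra hc
    exact h (by simp [coupling, setInd_of_not_mem hc])

lemma mem_image_sub {X : Type*} [AddCommGroup X] {S : Set X} {c v : X} :
    v ∈ (· - c) '' S ↔ v + c ∈ S := by
  constructor
  · rintro ⟨w, hw, rfl⟩; simpa using hw
  · intro h; exact ⟨v + c, h, by simp⟩

lemma isClosed_image_sub {X : Type*} [NormedAddCommGroup X] {S : Set X} (hS : IsClosed S)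
    (c : X) : IsClosed ((· - c) '' S) := by
  have : (· - c) '' S = (· + c) ⁻¹' S := by
    ext v
    rw [Set.mem_preimage, ← mem_image_sub]
  rw [this]
  exact hS.preimage (continuous_id.add continuous_const)

lemma lsc_setInd {X : Type*} [TopologicalSpace X] {S : Set X} (hS : IsClosed S) :
    LowerSemicontinuous (setInd S) := by
  intro x c hc
  by_cases hx : x ∈ S
  · rw [setInd_of_mem hx] at hc; exact absurd hc (by simp)
  · have : ∀ᶠ y in 𝓝 x, y ∉ S := hS.isOpen_compl.eventually_mem hx
    filter_upwards [this] with y hy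
    rw [setInd_of_not_mem hy]
    exact lt_of_lt_of_le hc le_top

lemma lsc_coupling {X : Type*} [MetricSpace X] {A B : Set X} (hA : IsClosed A)
    (hB : IsClosed B) : LowerSemicontinuous (coupling A B) := by
  have h1 : LowerSemicontinuous fun p : X × X => setInd A p.1 :=
    LowerSemicontinuous.comp (f := setInd A) (lsc_setInd hA) continuous_fst
  have h2 : LowerSemicontinuous fun p : X × X => setInd B p.2 :=
    LowerSemicontinuous.comp (f := setInd B) (lsc_setInd hB) continuous_snd
  have h3 : LowerSemicontinuous fun p : X × X => ENNReal.ofReal (dist p.1 p.2) :=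
    (ENNReal.continuous_ofReal.comp continuous_dist).lowerSemicontinuous
  exact (h1.add h3).add h2

lemma lsc_trunc {X : Type*} [TopologicalSpace X] {g : X → ℝ≥0∞} (hg : LowerSemicontinuous g)
    {M : ℝ} (hM : 0 < M) :
    LowerSemicontinuous (fun x => (min (g x) (ENNReal.ofReal M)).toReal) := by
  intro x c hc
  rcases le_or_gt c 0 with h0 | h0
  · rcases lt_or_ge c 0 with h0' | h0'
    · filter_upwards with y; exact lt_of_lt_of_le h0' ENNReal.toReal_nonneg
    · have hcc : c = 0 := le_antisymm h0 h0'
      subst hcc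
      have hgpos : 0 < g x := by
        by_contra hg0
        push_neg at hg0
        simp only [le_zero_iff] at hg0
        simp only [hg0] at hc
        simp at hc
      filter_upwards [hg x 0 hgpos] with y hy
      have hmin : 0 < min (g y) (ENNReal.ofReal M) :=
        lt_min hy (by simpa using hM)
      have hfin : min (g y) (ENNReal.ofReal M) ≠ ⊤ :=
        ne_top_of_le_ne_top ENNReal.ofReal_ne_top (min_le_right _ _)
      exact ENNReal.toReal_pos hmin.ne' hfin
  · have hfinx : min (g x) (ENNReal.ofReal M) ≠ ⊤ :=
      ne_top_of_le_ne_top ENNReal.ofReal_ne_top (min_le_right _ _)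
    have hlt : ENNReal.ofReal c < min (g x) (ENNReal.ofReal M) := by
      rw [ENNReal.ofReal_lt_iff_lt_toReal h0.le hfinx.lt_top.ne] at *
      exact hc
    have hltg : ENNReal.ofReal c < g x := hlt.trans_le (min_le_left _ _)
    have hltM : ENNReal.ofReal c < ENNReal.ofReal M := hlt.trans_le (min_le_right _ _)
    filter_upwards [hg x _ hltg] with y hy
    have h2 : ENNReal.ofReal c < min (g y) (ENNReal.ofReal M) := lt_min hy hltM
    have hfiny : min (g y) (ENNReal.ofReal M) ≠ ⊤ :=
      ne_top_of_le_ne_top ENNReal.ofReal_ne_top (min_le_right _ _)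
    calc c = (ENNReal.ofReal c).toReal := by rw [ENNReal.toReal_ofReal h0.le]
    _ < (min (g y) (ENNReal.ofReal M)).toReal :=
        (ENNReal.toReal_lt_toReal ENNReal.ofReal_ne_top hfiny).mpr h2

set_option maxHeartbeats 1600000 in
lemma forward_dir {X : Type*} [NormedAddCommGroup X] [NormedSpace ℝ X]
    {A B : Set X} {xbar : X} (hT : Transversal A B xbar) :
    ∃ δ > 0, ∃ κ > 0, ∀ a b : X, ‖a‖ ≤ δ → ‖b‖ ≤ δ →
      ∀ x ∈ ((· - a) '' A) ∩ Metric.ball xbar δ,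
        ∀ y ∈ ((· - b) '' B) ∩ Metric.ball xbar δ, x ≠ y →
          ENNReal.ofReal κ ≤ couplingSlope ((· - a) '' A) ((· - b) '' B) x y := by
  obtain ⟨K, hK, δT, hδT, hTr⟩ := hT
  refine ⟨δT/4, by positivity, 1/(2*K+3), by positivity, ?_⟩
  intro a b ha hb x hx y hy hxy
  obtain ⟨hxA, hxball⟩ := hx
  obtain ⟨hyB, hyball⟩ := hy
  set r := dist x y with hrdef
  have hr : 0 < r := dist_pos.mpr hxy
  rw [couplingSlope]
  refine Filter.le_limsup_of_frequently_le ?_ ⟨⊤, Filter.Eventually.of_forall fun _ => le_top⟩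
  rw [Filter.frequently_iff]
  intro U hU
  rw [Metric.mem_nhdsWithin_iff] at hU
  obtain ⟨ε, hε, hball⟩ := hU
  -- choose t
  set c := 2*K+3 with hcdef
  have hc3 : 3 ≤ c := by simp [hcdef]; linarith
  have hcpos : 0 < c := by linarith
  set t := min (1/2) (ε / (2*(c*r + 1))) with htdef
  have ht0 : 0 < t := by
    apply lt_min (by norm_num)
    positivity
  have ht1 : t < 1 := lt_of_le_of_lt (min_le_left _ _) (by norm_num)
  have htε : c * (t * r) < ε := by
    have h1 : t ≤ ε / (2*(c*r + 1)) := min_le_right _ _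
    have hD : (0:ℝ) < 2*(c*r + 1) := by positivity
    have h3 : (0:ℝ) ≤ c * r := by positivity
    have h1' : t * (2*(c*r + 1)) ≤ ε := (le_div_iff₀ hD).mp h1
    nlinarith [mul_nonneg ht0.le h3, ht0]
  -- apply transversality with translations a and b + (1-t)•(y-x)
  have hyx : ‖y - x‖ = r := by rw [← dist_eq_norm, dist_comm]
  have hyxlt : r < δT/2 := by
    have h1 : dist x y ≤ dist x xbar + dist xbar y := dist_triangle _ _ _
    have h2 : dist x xbar < δT/4 := mem_ball.mp hxball
    have h3 : dist xbar y < δT/4 := by rw [dist_comm]; exact mem_ball.mp hyball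
    rw [hrdef]; linarith
  set b' := b + (1-t) • (y - x) with hb'def
  have hb' : b' ∈ Metric.ball (0:X) δT := by
    rw [mem_ball_zero_iff]
    calc ‖b'‖ ≤ ‖b‖ + ‖(1-t) • (y-x)‖ := norm_add_le _ _
    _ = ‖b‖ + |1-t| * ‖y-x‖ := by rw [norm_smul, Real.norm_eq_abs]
    _ ≤ δT/4 + 1 * r := by
        have hle : |1-t| * ‖y-x‖ ≤ 1 * r := by
          rw [hyx, abs_of_nonneg (by linarith : (0:ℝ) ≤ 1 - t)]
          nlinarith
        exact add_le_add hb hle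
    _ < δT := by linarith
  have ha' : a ∈ Metric.ball (0:X) δT := by
    rw [mem_ball_zero_iff]; calc ‖a‖ ≤ δT/4 := ha
    _ < δT := by linarith
  have hxball' : x ∈ Metric.ball xbar δT :=
    mem_ball.mpr (lt_trans (mem_ball.mp hxball) (by linarith))
  have h1 := hTr a ha' b' hb' x hxball'
  have hxA0 : EMetric.infEdist x ((· - a) '' A) = 0 :=
    EMetric.infEdist_zero_of_mem hxA
  have hmemB' : x + t • (y - x) ∈ (· - b') '' B := by
    rw [mem_image_sub]
    have heq : x + t • (y - x) + b' = y + b := by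
      rw [hb'def]
      have hsmul : t • (y - x) + (1-t) • (y - x) = y - x := by
        rw [← add_smul]; norm_num
      calc x + t • (y - x) + (b + (1-t) • (y - x))
          = x + (t • (y - x) + (1-t) • (y - x)) + b := by abel
      _ = x + (y - x) + b := by rw [hsmul]
      _ = y + b := by abel
    rw [heq, ← mem_image_sub]
    exact hyB
  have hinfB' : EMetric.infEdist x ((· - b') '' B) ≤ ENNReal.ofReal (t * r) := by
    refine le_trans (EMetric.infEdist_le_edist_of_mem hmemB') ?_
    rw [edist_dist, dist_self_add_right, norm_smul, Real.norm_eq_abs, abs_of_pos ht0, hyx]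
  have h2 : EMetric.infEdist x (((· - a) '' A) ∩ ((· - b') '' B)) ≤
      ENNReal.ofReal (K * (t * r)) := by
    refine le_trans h1 ?_
    rw [hxA0, zero_add, ENNReal.ofReal_mul hK.le]
    exact mul_le_mul_right hinfB' _
  have htr0 : 0 < t * r := mul_pos ht0 hr
  have h2' : EMetric.infEdist x (((· - a) '' A) ∩ ((· - b') '' B)) <
      ENNReal.ofReal ((K+1) * (t * r)) := by
    refine lt_of_le_of_lt h2 ?_
    rw [ENNReal.ofReal_lt_ofReal_iff (by positivity)]
    nlinarith
  obtain ⟨z, hz, hzlt⟩ := EMetric.infEdist_lt_iff.mp h2'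
  obtain ⟨hzA, hzB'⟩ := hz
  have hdxz : dist x z < (K+1) * (t * r) := by
    rw [edist_dist] at hzlt
    exact (ENNReal.ofReal_lt_ofReal_iff_of_nonneg dist_nonneg).mp hzlt
  set v := z + (1-t) • (y - x) with hvdef
  have hvB : v ∈ (· - b) '' B := by
    rw [mem_image_sub]
    have heq : v + b = z + b' := by rw [hvdef, hb'def]; abel
    rw [heq, ← mem_image_sub]
    exact hzB'
  have hdzv : dist z v = (1-t) * r := by
    rw [hvdef, dist_self_add_right, norm_smul, Real.norm_eq_abs,
      abs_of_pos (by linarith), hyx]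
  have hdyv : dist y v ≤ t * r + dist x z := by
    have heq : y - v = t • (y - x) + (x - z) := by
      rw [hvdef]
      module
    rw [dist_eq_norm, heq]
    calc ‖t • (y - x) + (x - z)‖ ≤ ‖t • (y - x)‖ + ‖x - z‖ := norm_add_le _ _
    _ = t * r + dist x z := by
        rw [norm_smul, Real.norm_eq_abs, abs_of_pos ht0, hyx, ← dist_eq_norm]
  have hpne : (z, v) ≠ (x, y) := by
    intro heq
    rw [Prod.mk.injEq] at heq
    have h5 : dist z v = dist x y := by rw [heq.1, heq.2]
    rw [hdzv, ← hrdef] at h5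
    have h6 : 0 < t * r := mul_pos ht0 hr
    have h7 : (1-t)*r = r - t*r := by ring
    rw [h7] at h5
    linarith only [h5, h6]
  refine ⟨(z, v), ?_, ?_⟩
  · apply hball
    constructor
    · rw [mem_ball, Prod.dist_eq]
      apply max_lt
      · rw [dist_comm]
        calc dist x z < (K+1) * (t*r) := hdxz
        _ ≤ c * (t*r) := by rw [hcdef]; nlinarith
        _ < ε := htε
      · rw [dist_comm]
        calc dist y v ≤ t*r + dist x z := hdyv
        _ < t*r + (K+1)*(t*r) := by linarith
        _ ≤ c * (t*r) := by rw [hcdef]; nlinarith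
        _ < ε := htε
    · exact hpne
  · -- the quotient is at least 1/(2K+3)
    have hcxy : coupling ((· - a) '' A) ((· - b) '' B) (x, y) = ENNReal.ofReal r :=
      coupling_eq hxA hyB
    have hczv : coupling ((· - a) '' A) ((· - b) '' B) (z, v) =
        ENNReal.ofReal ((1-t) * r) := by
      rw [coupling_eq hzA hvB, hdzv]
    have hnum : coupling ((· - a) '' A) ((· - b) '' B) (x, y) -
        coupling ((· - a) '' A) ((· - b) '' B) (z, v) = ENNReal.ofReal (t * r) := by
      rw [hcxy, hczv, ← ENNReal.ofReal_sub _ (by nlinarith : (0:ℝ) ≤ (1-t)*r)]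
      congr 1
      ring
    have hdenom : dist x (z, v).1 + dist y (z, v).2 ≤ c * (t * r) := by
      simp only
      calc dist x z + dist y v ≤ dist x z + (t*r + dist x z) := by linarith
      _ ≤ (K+1)*(t*r) + (t*r + (K+1)*(t*r)) := by linarith
      _ = c * (t*r) := by rw [hcdef]; ring
    calc ENNReal.ofReal (1/(2*K+3))
        = ENNReal.ofReal (t*r) / ENNReal.ofReal (c * (t*r)) := by
          rw [← ENNReal.ofReal_div_of_pos (by positivity)]
          congr 1
          rw [hcdef]
          field_simp
    _ ≤ ENNReal.ofReal (t*r) /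
        ENNReal.ofReal (dist x (z, v).1 + dist y (z, v).2) :=
          ENNReal.div_le_div_left (ENNReal.ofReal_le_ofReal hdenom) _
    _ = _ := by rw [hnum]

set_option maxHeartbeats 1600000 in
lemma backward_dir {X : Type*} [NormedAddCommGroup X] [NormedSpace ℝ X] [CompleteSpace X]
    {A B : Set X} (hA : IsClosed A) (hB : IsClosed B) {xbar : X} (hx : xbar ∈ A ∩ B)
    (h : ∃ δ > 0, ∃ κ > 0, ∀ a b : X, ‖a‖ ≤ δ → ‖b‖ ≤ δ →
      ∀ x ∈ ((· - a) '' A) ∩ Metric.ball xbar δ,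
        ∀ y ∈ ((· - b) '' B) ∩ Metric.ball xbar δ, x ≠ y →
          ENNReal.ofReal κ ≤ couplingSlope ((· - a) '' A) ((· - b) '' B) x y) :
    Transversal A B xbar := by
  obtain ⟨δ, hδ, κ, hκ, hslope⟩ := h
  set α := κ/2 with hαdef
  have hα : 0 < α := by positivity
  set δT := δ * α / (12*(1+α)) with hδTdef
  have hδT : 0 < δT := by positivity
  have hδTδ : δT ≤ δ/12 := by
    rw [hδTdef, div_le_div_iff₀ (by positivity) (by norm_num)]
    nlinarith
  have hbudget : 6*δT/α + 6*δT = δ/2 := by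
    rw [hδTdef]
    field_simp
    ring
  refine ⟨1 + 1/α, by positivity, δT, hδT, ?_⟩
  intro a ha b hb x hxball
  rw [mem_ball_zero_iff] at ha hb
  rw [mem_ball] at hxball
  set A' := (· - a) '' A with hA'def
  set B' := (· - b) '' B with hB'def
  have hA'c : IsClosed A' := isClosed_image_sub hA a
  have hB'c : IsClosed B' := isClosed_image_sub hB b
  have hxbarA' : xbar - a ∈ A' := by rw [hA'def, mem_image_sub]; simpa using hx.1
  have hxbarB' : xbar - b ∈ B' := by rw [hB'def, mem_image_sub]; simpa using hx.2
  set dA := EMetric.infEdist x A' with hdAdef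
  set dB := EMetric.infEdist x B' with hdBdef
  have hdA2 : dA ≤ ENNReal.ofReal (2*δT) := by
    refine le_trans (EMetric.infEdist_le_edist_of_mem hxbarA') ?_
    rw [edist_dist]
    apply ENNReal.ofReal_le_ofReal
    calc dist x (xbar - a) ≤ dist x xbar + dist xbar (xbar - a) := dist_triangle _ _ _
    _ = dist x xbar + ‖a‖ := by rw [dist_self_sub_right]
    _ ≤ 2*δT := by linarith
  have hdB2 : dB ≤ ENNReal.ofReal (2*δT) := by
    refine le_trans (EMetric.infEdist_le_edist_of_mem hxbarB') ?_
    rw [edist_dist]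
    apply ENNReal.ofReal_le_ofReal
    calc dist x (xbar - b) ≤ dist x xbar + dist xbar (xbar - b) := dist_triangle _ _ _
    _ = dist x xbar + ‖b‖ := by rw [dist_self_sub_right]
    _ ≤ 2*δT := by linarith
  have hdAne : dA ≠ ⊤ := (lt_of_le_of_lt hdA2 ENNReal.ofReal_lt_top).ne
  have hdBne : dB ≠ ⊤ := (lt_of_le_of_lt hdB2 ENNReal.ofReal_lt_top).ne
  have hdAle : dA.toReal ≤ 2*δT := by
    rw [← ENNReal.toReal_ofReal (by positivity : (0:ℝ) ≤ 2*δT)]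
    exact ENNReal.toReal_mono ENNReal.ofReal_ne_top hdA2
  have hdBle : dB.toReal ≤ 2*δT := by
    rw [← ENNReal.toReal_ofReal (by positivity : (0:ℝ) ≤ 2*δT)]
    exact ENNReal.toReal_mono ENNReal.ofReal_ne_top hdB2
  rcases eq_or_ne (dA + dB) 0 with hzero | hne0
  · -- x is in both sets
    rw [add_eq_zero] at hzero
    have hxA' : x ∈ A' := (EMetric.mem_iff_infEdist_zero_of_closed hA'c).mpr hzero.1
    have hxB' : x ∈ B' := (EMetric.mem_iff_infEdist_zero_of_closed hB'c).mpr hzero.2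
    rw [show EMetric.infEdist x (A' ∩ B') = 0 from EMetric.infEdist_zero_of_mem (Set.mem_inter hxA' hxB')]
    exact zero_le
  · set r0 := (dA + dB).toReal with hr0def
    have hsumne : dA + dB ≠ ⊤ := ENNReal.add_ne_top.mpr ⟨hdAne, hdBne⟩
    have hr0pos : 0 < r0 := ENNReal.toReal_pos hne0 hsumne
    have hr0eq : r0 = dA.toReal + dB.toReal := ENNReal.toReal_add hdAne hdBne
    have hr04 : r0 ≤ 4*δT := by rw [hr0eq]; linarith
    apply ENNReal.le_of_forall_pos_le_add
    intro ε' hε' _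
    have hε'R : (0:ℝ) < (ε' : ℝ) := by exact_mod_cast hε'
    set β := 1 + 2/α with hβdef
    have hβpos : 0 < β := by positivity
    set εr := min δT ((ε' : ℝ)/β) / 2 with hεrdef
    have hεrpos : 0 < εr := by
      apply div_pos (lt_min hδT (by positivity)) (by norm_num)
    have hεrδT : εr ≤ δT := by
      have h1 : min δT ((ε' : ℝ)/β) ≤ δT := min_le_left _ _
      rw [hεrdef]; linarith
    have hεrε' : β * εr ≤ (ε' : ℝ) := by
      have h1 : εr ≤ ((ε' : ℝ)/β) / 2 := by
        have := min_le_right δT ((ε' : ℝ)/β)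
        rw [hεrdef]; linarith
      have h2 : β * εr ≤ β * (((ε' : ℝ)/β) / 2) :=
        mul_le_mul_of_nonneg_left h1 hβpos.le
      calc β * εr ≤ β * (((ε' : ℝ)/β) / 2) := h2
      _ = (ε' : ℝ) / 2 := by field_simp
      _ ≤ (ε' : ℝ) := by linarith
    -- pick approximate nearest points u ∈ A', v ∈ B'
    have hdAlt : dA < ENNReal.ofReal (dA.toReal + εr) := by
      conv_lhs => rw [← ENNReal.ofReal_toReal hdAne]
      rw [ENNReal.ofReal_lt_ofReal_iff (by positivity)]
      linarith
    have hdBlt : dB < ENNReal.ofReal (dB.toReal + εr) := by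
      conv_lhs => rw [← ENNReal.ofReal_toReal hdBne]
      rw [ENNReal.ofReal_lt_ofReal_iff (by positivity)]
      linarith
    obtain ⟨u, huA, hue⟩ := EMetric.infEdist_lt_iff.mp hdAlt
    obtain ⟨v, hvB, hve⟩ := EMetric.infEdist_lt_iff.mp hdBlt
    rw [edist_dist] at hue hve
    have hdu : dist x u < dA.toReal + εr :=
      (ENNReal.ofReal_lt_ofReal_iff_of_nonneg dist_nonneg).mp hue
    have hdv : dist x v < dB.toReal + εr :=
      (ENNReal.ofReal_lt_ofReal_iff_of_nonneg dist_nonneg).mp hve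
    have hduv : dist u v < r0 + 2*εr := by
      calc dist u v ≤ dist u x + dist x v := dist_triangle _ _ _
      _ = dist x u + dist x v := by rw [dist_comm]
      _ < (dA.toReal + εr) + (dB.toReal + εr) := by linarith
      _ = r0 + 2*εr := by rw [hr0eq]; ring
    set M := r0 + 2*εr + 1 with hMdef
    have hM : 0 < M := by positivity
    set F : X × X → ℝ := fun p => (min (coupling A' B' p) (ENNReal.ofReal M)).toReal with hFdef
    have hFlsc : LowerSemicontinuous F := lsc_trunc (lsc_coupling hA'c hB'c) hM
    have hF0 : ∀ p, 0 ≤ F p := fun p => ENNReal.toReal_nonneg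
    obtain ⟨q, hq1, hq2⟩ := my_ekeland hFlsc hF0 hα (u, v)
    have hcuv : coupling A' B' (u, v) = ENNReal.ofReal (dist u v) := coupling_eq huA hvB
    have hFuv : F (u, v) = dist u v := by
      show (min (coupling A' B' (u, v)) (ENNReal.ofReal M)).toReal = _
      rw [hcuv, min_eq_left (ENNReal.ofReal_le_ofReal (by linarith : dist u v ≤ M))]
      exact ENNReal.toReal_ofReal dist_nonneg
    have hFq_le : F q ≤ F (u, v) := by
      nlinarith [hq1, mul_nonneg hα.le (dist_nonneg (x := (u,v)) (y := q))]
    have hFqM : F q < M := by rw [hFuv] at hFq_le; linarith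
    have hcqM : coupling A' B' q < ENNReal.ofReal M := by
      by_contra hcon
      push_neg at hcon
      have hmin : min (coupling A' B' q) (ENNReal.ofReal M) = ENNReal.ofReal M :=
        min_eq_right hcon
      have : F q = M := by
        rw [hFdef]; simp only [hmin]; exact ENNReal.toReal_ofReal hM.le
      linarith
    have hcqne : coupling A' B' q ≠ ⊤ := (hcqM.trans ENNReal.ofReal_lt_top).ne
    obtain ⟨hqA, hqB⟩ := coupling_finite hcqne
    have hcq : coupling A' B' q = ENNReal.ofReal (dist q.1 q.2) := coupling_eq hqA hqB
    have hFq : F q = dist q.1 q.2 := by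
      show (min (coupling A' B' q) (ENNReal.ofReal M)).toReal = _
      rw [min_eq_left hcqM.le, hcq]
      exact ENNReal.toReal_ofReal dist_nonneg
    have hdistq : α * dist (u, v) q ≤ dist u v := by
      have h1 := hq1
      rw [hFuv] at h1
      linarith [hF0 q]
    have hdistq' : dist (u, v) q ≤ (r0 + 2*εr)/α := by
      rw [le_div_iff₀ hα, mul_comm (dist (u, v) q) α]
      linarith only [hdistq, hduv]
    have hd1 : dist u q.1 ≤ (r0 + 2*εr)/α := by
      refine le_trans ?_ hdistq'
      rw [Prod.dist_eq]
      exact le_max_left _ _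
    have hd2 : dist v q.2 ≤ (r0 + 2*εr)/α := by
      refine le_trans ?_ hdistq'
      rw [Prod.dist_eq]
      exact le_max_right _ _
    have hbound : (r0 + 2*εr)/α ≤ 6*δT/α := by
      gcongr
      linarith
    have hq1ball : q.1 ∈ Metric.ball xbar δ := by
      rw [mem_ball]
      calc dist q.1 xbar ≤ dist q.1 u + dist u x + dist x xbar := dist_triangle4 _ _ _ _
      _ = dist u q.1 + dist x u + dist x xbar := by rw [dist_comm q.1 u, dist_comm u x]
      _ < 6*δT/α + (dA.toReal + εr) + δT := by
          have := hd1.trans hbound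
          linarith
      _ ≤ 6*δT/α + 6*δT := by linarith
      _ = δ/2 := hbudget
      _ < δ := by linarith
    have hq2ball : q.2 ∈ Metric.ball xbar δ := by
      rw [mem_ball]
      calc dist q.2 xbar ≤ dist q.2 v + dist v x + dist x xbar := dist_triangle4 _ _ _ _
      _ = dist v q.2 + dist x v + dist x xbar := by rw [dist_comm q.2 v, dist_comm v x]
      _ < 6*δT/α + (dB.toReal + εr) + δT := by
          have := hd2.trans hbound
          linarith
      _ ≤ 6*δT/α + 6*δT := by linarith
      _ = δ/2 := hbudget
      _ < δ := by linarith
    -- the Ekeland point must be diagonal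
    have hqq : q.1 = q.2 := by
      by_contra hne
      have haδ : ‖a‖ ≤ δ := by linarith only [ha, hδTδ, hδ]
      have hbδ : ‖b‖ ≤ δ := by linarith only [hb, hδTδ, hδ]
      have hsl := hslope a b haδ hbδ q.1 ⟨hqA, hq1ball⟩ q.2 ⟨hqB, hq2ball⟩ hne
      have hub : couplingSlope A' B' q.1 q.2 ≤ ENNReal.ofReal α := by
        rw [couplingSlope]
        apply Filter.limsup_le_of_le (by isBoundedDefault)
        filter_upwards [self_mem_nhdsWithin] with p hp
        apply ENNReal.div_le_of_le_mul
        rcases eq_or_ne (coupling A' B' p) ⊤ with htop | hpne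
        · rw [htop]
          simp
        · obtain ⟨hpA, hpB⟩ := coupling_finite hpne
          have hcp : coupling A' B' p = ENNReal.ofReal (dist p.1 p.2) := coupling_eq hpA hpB
          have hcq12 : coupling A' B' (q.1, q.2) = ENNReal.ofReal (dist q.1 q.2) :=
            coupling_eq hqA hqB
          rcases le_or_gt (dist q.1 q.2) (dist p.1 p.2) with hle | hlt
          · rw [hcq12, hcp, tsub_eq_zero_of_le (ENNReal.ofReal_le_ofReal hle)]
            exact zero_le
          · -- use the Ekeland inequality
            have hFp : F p = dist p.1 p.2 := by
              have hpM : coupling A' B' p < ENNReal.ofReal M := by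
                rw [hcp, ENNReal.ofReal_lt_ofReal_iff hM]
                linarith [hFq.le, hFq.ge, hFqM, hlt]
              show (min (coupling A' B' p) (ENNReal.ofReal M)).toReal = _
              rw [min_eq_left hpM.le, hcp]
              exact ENNReal.toReal_ofReal dist_nonneg
            have hek := hq2 p
            rw [hFq, hFp] at hek
            have hsum : dist q p ≤ dist q.1 p.1 + dist q.2 p.2 := by
              rw [Prod.dist_eq]
              exact max_le (le_add_of_nonneg_right dist_nonneg)
                (le_add_of_nonneg_left dist_nonneg)
            have hreal : dist q.1 q.2 - dist p.1 p.2 ≤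
                α * (dist q.1 p.1 + dist q.2 p.2) := by
              nlinarith [mul_le_mul_of_nonneg_left hsum hα.le]
            rw [hcq12, hcp, ← ENNReal.ofReal_sub _ dist_nonneg]
            rw [← ENNReal.ofReal_mul hα.le]
            exact ENNReal.ofReal_le_ofReal hreal
      have : ENNReal.ofReal κ ≤ ENNReal.ofReal α := le_trans hsl hub
      rw [ENNReal.ofReal_le_ofReal_iff hα.le] at this
      rw [hαdef] at this
      linarith
    -- conclude
    have hqAB : q.1 ∈ A' ∩ B' := ⟨hqA, hqq ▸ hqB⟩
    calc EMetric.infEdist x (A' ∩ B') ≤ edist x q.1 :=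
          EMetric.infEdist_le_edist_of_mem hqAB
    _ = ENNReal.ofReal (dist x q.1) := edist_dist _ _
    _ ≤ ENNReal.ofReal ((dA.toReal + εr) + (r0 + 2*εr)/α) := by
        apply ENNReal.ofReal_le_ofReal
        calc dist x q.1 ≤ dist x u + dist u q.1 := dist_triangle _ _ _
        _ ≤ (dA.toReal + εr) + (r0 + 2*εr)/α := add_le_add hdu.le hd1
    _ ≤ ENNReal.ofReal ((1 + 1/α) * r0 + (ε' : ℝ)) := by
        apply ENNReal.ofReal_le_ofReal
        have hda : dA.toReal ≤ r0 := by
          rw [hr0eq]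
          nlinarith [ENNReal.toReal_nonneg (a := dB)]
        have hsplit : (r0 + 2*εr)/α = r0/α + 2*(εr/α) := by ring
        have hbe : β*εr = εr + 2*(εr/α) := by rw [hβdef]; ring
        have h9 : εr + 2*(εr/α) ≤ (ε' : ℝ) := by rw [← hbe]; exact hεrε'
        have hKr : (1 + 1/α)*r0 = r0 + r0/α := by ring
        linarith only [hda, hsplit, h9, hKr]
    _ ≤ ENNReal.ofReal (1 + 1/α) * (dA + dB) + ε' := by
        rw [ENNReal.ofReal_add (by positivity) hε'R.le, ENNReal.ofReal_coe_nnreal,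
          ENNReal.ofReal_mul (by positivity : (0:ℝ) ≤ 1 + 1/α), hr0def,
          ENNReal.ofReal_toReal hsumne]

end Helpers

theorem stmt10 {X : Type*} [NormedAddCommGroup X] [NormedSpace ℝ X] [CompleteSpace X]
    {A B : Set X} (hA : IsClosed A) (hB : IsClosed B) {xbar : X} (hx : xbar ∈ A ∩ B) :
    Transversal A B xbar ↔
      ∃ δ > 0, ∃ κ > 0, ∀ a b : X, ‖a‖ ≤ δ → ‖b‖ ≤ δ →
        ∀ x ∈ ((· - a) '' A) ∩ Metric.ball xbar δ,
          ∀ y ∈ ((· - b) '' B) ∩ Metric.ball xbar δ, x ≠ y →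
            ENNReal.ofReal κ ≤ couplingSlope ((· - a) '' A) ((· - b) '' B) x y := by
  constructor
  · exact forward_dir
  · exact backward_dir hA hB hx
end

section
/- Let X be a Banach space and let A and B be closed convex subsets of X with x̄ ∈ A ∩ B. Then A and B are tangentially transversal at x̄ if and only if A and B are subtransversal at x̄. -/
open Metric Set
open scoped ENNReal

/-- Tangential transversality of closed sets `A`, `B` at a point `x0 ∈ A ∩ B`. -/
def TangTrans {X : Type*} [MetricSpace X] (A B : Set X) (x0 : X) : Prop :=
  ∃ M > 0, ∃ δ > 0, ∃ η > 0,
    ∀ xA ∈ Metric.closedBall x0 δ ∩ A, ∀ xB ∈ Metric.closedBall x0 δ ∩ B, xA ≠ xB →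
      ∃ t : ℕ → ℝ, ∃ xa : ℕ → X, ∃ xb : ℕ → X,
        (∀ m, 0 < t m) ∧ Filter.Tendsto t Filter.atTop (nhds 0) ∧
        (∀ m, xa m ∈ A) ∧ (∀ m, xb m ∈ B) ∧
        ∀ m, dist (xa m) xA ≤ t m * M ∧ dist (xb m) xB ≤ t m * M ∧
          dist (xa m) (xb m) ≤ dist xA xB - t m * η

/-- Subtransversality of closed sets `A`, `B` at a point `x0 ∈ A ∩ B`. -/
def Subtrans {X : Type*} [MetricSpace X] (A B : Set X) (x0 : X) : Prop :=
  ∃ K > 0, ∃ δ > 0, ∀ x ∈ Metric.ball x0 δ,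
    EMetric.infEdist x (A ∩ B) ≤
      ENNReal.ofReal K * (EMetric.infEdist x A + EMetric.infEdist x B)


section Aux
variable {X : Type*} [MetricSpace X]

/-- Admissible step for the iteration. -/
def Adm (A B : Set X) (M η : ℝ) (p : X × X) (t : ℝ) (q : X × X) : Prop :=
  0 < t ∧ t ≤ 1 ∧ q.1 ∈ A ∧ q.2 ∈ B ∧ dist q.1 p.1 ≤ 2*t*M ∧ dist q.2 p.2 ≤ 2*t*M ∧
    dist q.1 q.2 ≤ dist p.1 p.2 - t*(η/2)

/-- The set of admissible step sizes. -/
def AdmT (A B : Set X) (M η : ℝ) (p : X × X) : Set ℝ := {t | ∃ q, Adm A B M η p t q}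

lemma AdmT_bdd (A B : Set X) (M η : ℝ) (p : X × X) : AdmT A B M η p ⊆ Set.Iic 1 := by
  rintro t ⟨q, h⟩; exact h.2.1

lemma exists_good_step {A B : Set X} {M η : ℝ} {p : X × X}
    (h : (AdmT A B M η p).Nonempty) :
    ∃ tq : ℝ × (X × X), Adm A B M η p tq.1 tq.2 ∧ sSup (AdmT A B M η p) / 2 ≤ tq.1 := by
  obtain ⟨t0, q0, h0⟩ := h
  have hbdd : BddAbove (AdmT A B M η p) := ⟨1, fun t ht => AdmT_bdd A B M η p ht⟩
  have hpos : 0 < sSup (AdmT A B M η p) :=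
    lt_of_lt_of_le h0.1 (le_csSup hbdd ⟨q0, h0⟩)
  obtain ⟨t, ht, htgt⟩ := exists_lt_of_lt_csSup (⟨t0, q0, h0⟩ : (AdmT A B M η p).Nonempty) (by linarith : sSup (AdmT A B M η p) / 2 < sSup (AdmT A B M η p))
  obtain ⟨q, hq⟩ := ht
  exact ⟨(t, q), hq, htgt.le⟩

open Classical in
noncomputable def Fstep (A B : Set X) (M η : ℝ) (p : X × X) : ℝ × (X × X) :=
  if h : ∃ tq : ℝ × (X × X), Adm A B M η p tq.1 tq.2 ∧ sSup (AdmT A B M η p) / 2 ≤ tq.1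
  then h.choose else (0, p)

lemma Fstep_spec {A B : Set X} {M η : ℝ} {p : X × X} (h : (AdmT A B M η p).Nonempty) :
    Adm A B M η p (Fstep A B M η p).1 (Fstep A B M η p).2 ∧
      sSup (AdmT A B M η p) / 2 ≤ (Fstep A B M η p).1 := by
  have h' := exists_good_step h
  classical
  rw [Fstep, dif_pos h']
  exact h'.choose_spec

lemma Fstep_empty {A B : Set X} {M η : ℝ} {p : X × X} (h : ¬ (AdmT A B M η p).Nonempty) :
    Fstep A B M η p = (0, p) := by
  classical
  rw [Fstep, dif_neg]
  rintro ⟨tq, htq, -⟩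
  exact h ⟨tq.1, tq.2, htq⟩

/-- One-step properties, valid in all cases. -/
lemma Fstep_props {A B : Set X} {M η : ℝ} (hM : 0 < M) {p : X × X}
    (hpA : p.1 ∈ A) (hpB : p.2 ∈ B) :
    0 ≤ (Fstep A B M η p).1 ∧ (Fstep A B M η p).2.1 ∈ A ∧ (Fstep A B M η p).2.2 ∈ B ∧
      dist (Fstep A B M η p).2.1 p.1 ≤ 2*(Fstep A B M η p).1*M ∧
      dist (Fstep A B M η p).2.2 p.2 ≤ 2*(Fstep A B M η p).1*M ∧
      dist (Fstep A B M η p).2.1 (Fstep A B M η p).2.2 ≤ dist p.1 p.2 - (Fstep A B M η p).1*(η/2) := by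
  by_cases h : (AdmT A B M η p).Nonempty
  · obtain ⟨⟨ht0, ht1, hqA, hqB, hd1, hd2, hd3⟩, -⟩ := Fstep_spec h
    exact ⟨ht0.le, hqA, hqB, hd1, hd2, hd3⟩
  · rw [Fstep_empty h]
    simp [hpA, hpB, dist_self]

end Aux

lemma key_lemma {X : Type*} [MetricSpace X] [CompleteSpace X] {A B : Set X}
    (hA : IsClosed A) (hB : IsClosed B) {xbar : X} {M δ η : ℝ}
    (hM : 0 < M) (hδ : 0 < δ) (hη : 0 < η)
    (hTT : ∀ xA ∈ Metric.closedBall xbar δ ∩ A, ∀ xB ∈ Metric.closedBall xbar δ ∩ B, xA ≠ xB →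
      ∃ t : ℕ → ℝ, ∃ xa : ℕ → X, ∃ xb : ℕ → X,
        (∀ m, 0 < t m) ∧ Filter.Tendsto t Filter.atTop (nhds 0) ∧
        (∀ m, xa m ∈ A) ∧ (∀ m, xb m ∈ B) ∧
        ∀ m, dist (xa m) xA ≤ t m * M ∧ dist (xb m) xB ≤ t m * M ∧
          dist (xa m) (xb m) ≤ dist xA xB - t m * η)
    {a0 b0 : X} (ha0 : a0 ∈ A) (hb0 : b0 ∈ B)
    (ha0b : dist a0 xbar ≤ δ/4) (hb0b : dist b0 xbar ≤ δ/4)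
    (hd0 : (4*M/η) * dist a0 b0 ≤ δ/2) :
    ∃ c ∈ A ∩ B, dist c a0 ≤ (4*M/η) * dist a0 b0 := by
  classical
  set d0 := dist a0 b0 with hd0def
  -- the iteration
  set G : X × X → X × X := fun p => (Fstep A B M η p).2 with hG
  set seq : ℕ → X × X := fun n => G^[n] (a0, b0) with hseq
  have hseq_succ : ∀ n, seq (n+1) = (Fstep A B M η (seq n)).2 := by
    intro n
    simp only [hseq, Function.iterate_succ_apply', hG]
  set T : ℕ → ℝ := fun n => (Fstep A B M η (seq n)).1 with hT
  set a : ℕ → X := fun n => (seq n).1 with ha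
  set b : ℕ → X := fun n => (seq n).2 with hb
  set d : ℕ → ℝ := fun n => dist (a n) (b n) with hd
  -- membership invariant
  have hmem : ∀ n, a n ∈ A ∧ b n ∈ B := by
    intro n
    induction n with
    | zero => exact ⟨ha0, hb0⟩
    | succ n ih =>
      have := Fstep_props (A := A) (B := B) (η := η) hM ih.1 ih.2
      show (seq (n+1)).1 ∈ A ∧ (seq (n+1)).2 ∈ B
      rw [hseq_succ n]
      exact ⟨this.2.1, this.2.2.1⟩
  have hstep : ∀ n, 0 ≤ T n ∧ dist (a (n+1)) (a n) ≤ 2*T n*M ∧ dist (b (n+1)) (b n) ≤ 2*T n*M ∧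
      d (n+1) ≤ d n - T n * (η/2) := by
    intro n
    have h := Fstep_props (A := A) (B := B) (η := η) hM (hmem n).1 (hmem n).2
    refine ⟨h.1, ?_, ?_, ?_⟩
    · show dist (seq (n+1)).1 (seq n).1 ≤ 2*T n*M
      rw [hseq_succ n]; exact h.2.2.2.1
    · show dist (seq (n+1)).2 (seq n).2 ≤ 2*T n*M
      rw [hseq_succ n]; exact h.2.2.2.2.1
    · show dist (seq (n+1)).1 (seq (n+1)).2 ≤ dist (seq n).1 (seq n).2 - T n * (η/2)
      rw [hseq_succ n]; exact h.2.2.2.2.2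
  have hTnn : ∀ n, 0 ≤ T n := fun n => (hstep n).1
  -- partial sums bound
  set S : ℕ → ℝ := fun n => ∑ k ∈ Finset.range n, T k with hS
  have hSsum : ∀ n, S n ≤ (2/η) * (d0 - d n) := by
    intro n
    induction n with
    | zero => simp [hS, hd, ha, hb, hseq, hd0def]
    | succ n ih =>
      have h1 : T n * (η/2) ≤ d n - d (n+1) := by linarith [(hstep n).2.2.2]
      have h2 : (2/η) * (T n * (η/2)) ≤ (2/η) * (d n - d (n+1)) :=
        mul_le_mul_of_nonneg_left h1 (by positivity)
      have h3 : (2/η) * (T n * (η/2)) = T n := by field_simp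
      have : S (n+1) = S n + T n := by rw [hS]; exact Finset.sum_range_succ _ _
      rw [this]
      nlinarith
  have hdnn : ∀ n, 0 ≤ d n := fun n => dist_nonneg
  have hSbound : ∀ n, S n ≤ (2/η) * d0 := by
    intro n
    calc S n ≤ (2/η) * (d0 - d n) := hSsum n
      _ ≤ (2/η) * d0 := by nlinarith [hdnn n, (by positivity : (0:ℝ) ≤ 2/η)]
  -- movement bound
  have hmove : ∀ n, dist (a n) a0 ≤ 2*M*S n ∧ dist (b n) b0 ≤ 2*M*S n := by
    intro n
    induction n with
    | zero => simp [ha, hb, hseq, hS]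
    | succ n ih =>
      have hs : S (n+1) = S n + T n := Finset.sum_range_succ _ _
      constructor
      · calc dist (a (n+1)) a0 ≤ dist (a (n+1)) (a n) + dist (a n) a0 := dist_triangle _ _ _
          _ ≤ 2*T n*M + 2*M*S n := add_le_add (hstep n).2.1 ih.1
          _ = 2*M*S (n+1) := by rw [hs]; ring
      · calc dist (b (n+1)) b0 ≤ dist (b (n+1)) (b n) + dist (b n) b0 := dist_triangle _ _ _
          _ ≤ 2*T n*M + 2*M*S n := add_le_add (hstep n).2.2.1 ih.2
          _ = 2*M*S (n+1) := by rw [hs]; ring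
  have hmove' : ∀ n, dist (a n) a0 ≤ (4*M/η)*d0 ∧ dist (b n) b0 ≤ (4*M/η)*d0 := by
    intro n
    have h1 : 2*M*S n ≤ (4*M/η)*d0 := by
      have := hSbound n
      have h2 : 2*M*S n ≤ 2*M*((2/η)*d0) := by nlinarith
      calc 2*M*S n ≤ 2*M*((2/η)*d0) := h2
        _ = (4*M/η)*d0 := by field_simp; ring
    exact ⟨(hmove n).1.trans h1, (hmove n).2.trans h1⟩
  -- iterates stay in the ball
  have hball : ∀ n, a n ∈ Metric.closedBall xbar δ ∧ b n ∈ Metric.closedBall xbar δ := by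
    intro n
    constructor
    · rw [Metric.mem_closedBall]
      calc dist (a n) xbar ≤ dist (a n) a0 + dist a0 xbar := dist_triangle _ _ _
        _ ≤ (4*M/η)*d0 + δ/4 := add_le_add (hmove' n).1 ha0b
        _ ≤ δ/2 + δ/4 := by linarith
        _ ≤ δ := by linarith
    · rw [Metric.mem_closedBall]
      calc dist (b n) xbar ≤ dist (b n) b0 + dist b0 xbar := dist_triangle _ _ _
        _ ≤ (4*M/η)*d0 + δ/4 := add_le_add (hmove' n).2 hb0b
        _ ≤ δ/2 + δ/4 := by linarith
        _ ≤ δ := by linarith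
  -- summability and Cauchy
  have hTsum : Summable T :=
    summable_of_sum_range_le hTnn (fun n => (hSbound n).trans (le_refl _))
  have hsum2 : Summable (fun n => 2*T n*M) := (hTsum.mul_left 2).mul_right M
  have hcauchyA : CauchySeq a :=
    cauchySeq_of_dist_le_of_summable (fun n => 2*T n*M)
      (fun n => by rw [dist_comm]; exact (hstep n).2.1) hsum2
  have hcauchyB : CauchySeq b :=
    cauchySeq_of_dist_le_of_summable (fun n => 2*T n*M)
      (fun n => by rw [dist_comm]; exact (hstep n).2.2.1) hsum2
  obtain ⟨ainf, halim⟩ := cauchySeq_tendsto_of_complete hcauchyA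
  obtain ⟨binf, hblim⟩ := cauchySeq_tendsto_of_complete hcauchyB
  have hainfA : ainf ∈ A := hA.mem_of_tendsto halim (Filter.Eventually.of_forall fun n => (hmem n).1)
  have hbinfB : binf ∈ B := hB.mem_of_tendsto hblim (Filter.Eventually.of_forall fun n => (hmem n).2)
  have hainfball : ainf ∈ Metric.closedBall xbar δ :=
    Metric.isClosed_closedBall.mem_of_tendsto halim (Filter.Eventually.of_forall fun n => (hball n).1)
  have hbinfball : binf ∈ Metric.closedBall xbar δ :=
    Metric.isClosed_closedBall.mem_of_tendsto hblim (Filter.Eventually.of_forall fun n => (hball n).2)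
  have hainf_dist : dist ainf a0 ≤ (4*M/η)*d0 := by
    have hcont : Filter.Tendsto (fun n => dist (a n) a0) Filter.atTop (nhds (dist ainf a0)) :=
      (halim.dist tendsto_const_nhds)
    exact le_of_tendsto hcont (Filter.Eventually.of_forall fun n => (hmove' n).1)
  -- d tends to dist ainf binf, antitone
  have hdlim : Filter.Tendsto d Filter.atTop (nhds (dist ainf binf)) := halim.dist hblim
  have hdanti : ∀ n, d (n+1) ≤ d n := by
    intro n
    have := (hstep n).2.2.2
    nlinarith [hTnn n, hη.le]
  have hdanti' : Antitone d := antitone_nat_of_succ_le hdanti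
  have hdge : ∀ n, dist ainf binf ≤ d n := fun n => hdanti'.le_of_tendsto hdlim n
  -- claim: ainf = binf
  have heq : ainf = binf := by
    by_contra hne
    obtain ⟨t, xa, xb, htpos, htlim, hxaA, hxbB, hprop⟩ :=
      hTT ainf ⟨hainfball, hainfA⟩ binf ⟨hbinfball, hbinfB⟩ hne
    have h1 : ∀ᶠ m in Filter.atTop, t m < 1 := htlim.eventually_lt_const one_pos
    obtain ⟨m0, hm0⟩ := h1.exists
    set t0 := t m0 with ht0
    have ht0pos : 0 < t0 := htpos m0
    have hq := hprop m0
    -- eventually a n, b n close to limits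
    have h2 : ∀ᶠ n in Filter.atTop, dist (a n) ainf < t0*M :=
      (Metric.tendsto_atTop.1 halim _ (by positivity) |> fun ⟨N, hN⟩ =>
        Filter.eventually_atTop.2 ⟨N, fun n hn => hN n hn⟩)
    have h3 : ∀ᶠ n in Filter.atTop, dist (b n) binf < t0*M :=
      (Metric.tendsto_atTop.1 hblim _ (by positivity) |> fun ⟨N, hN⟩ =>
        Filter.eventually_atTop.2 ⟨N, fun n hn => hN n hn⟩)
    -- eventually T n < t0/2
    have h4 : ∀ᶠ n in Filter.atTop, T n < t0/2 :=
      (hTsum.tendsto_atTop_zero).eventually_lt_const (by positivity)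
    obtain ⟨n, hn2, hn3, hn4⟩ := (h2.and (h3.and h4)).exists
    -- t0 is an admissible step size at seq n
    have hadm : t0 ∈ AdmT A B M η (seq n) := by
      refine ⟨(xa m0, xb m0), ht0pos, hm0.le, hxaA m0, hxbB m0, ?_, ?_, ?_⟩
      · calc dist (xa m0) (a n) ≤ dist (xa m0) ainf + dist ainf (a n) := dist_triangle _ _ _
          _ ≤ t0*M + t0*M := add_le_add hq.1 (by rw [dist_comm]; exact hn2.le)
          _ = 2*t0*M := by ring
      · calc dist (xb m0) (b n) ≤ dist (xb m0) binf + dist binf (b n) := dist_triangle _ _ _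
          _ ≤ t0*M + t0*M := add_le_add hq.2.1 (by rw [dist_comm]; exact hn3.le)
          _ = 2*t0*M := by ring
      · calc dist (xa m0) (xb m0) ≤ dist ainf binf - t0*η := hq.2.2
          _ ≤ d n - t0*η := by linarith [hdge n]
          _ ≤ dist (seq n).1 (seq n).2 - t0*(η/2) := by
              have hdn : d n = dist (seq n).1 (seq n).2 := rfl
              rw [← hdn]; nlinarith [ht0pos.le, hη.le]
    have hbdd : BddAbove (AdmT A B M η (seq n)) := ⟨1, fun s hs => AdmT_bdd A B M η (seq n) hs⟩
    have hsup : t0 ≤ sSup (AdmT A B M η (seq n)) := le_csSup hbdd hadm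
    have hTn : sSup (AdmT A B M η (seq n)) / 2 ≤ T n := (Fstep_spec ⟨t0, hadm⟩).2
    linarith
  exact ⟨ainf, ⟨hainfA, heq ▸ hbinfB⟩, hainf_dist⟩

lemma infEdist_eq_ofReal' {X : Type*} [MetricSpace X] {s : Set X} (h : s.Nonempty) (x : X) :
    EMetric.infEdist x s = ENNReal.ofReal (Metric.infDist x s) := by
  rw [Metric.infDist, ENNReal.ofReal_toReal (Metric.infEdist_ne_top h)]; rfl

lemma tang_to_sub {X : Type*} [MetricSpace X] [CompleteSpace X]
    {A B : Set X} (hA : IsClosed A) (hB : IsClosed B) {xbar : X} (hx : xbar ∈ A ∩ B)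
    (hM : ∃ M > 0, ∃ δ > 0, ∃ η > 0,
      ∀ xA ∈ Metric.closedBall xbar δ ∩ A, ∀ xB ∈ Metric.closedBall xbar δ ∩ B, xA ≠ xB →
        ∃ t : ℕ → ℝ, ∃ xa : ℕ → X, ∃ xb : ℕ → X,
          (∀ m, 0 < t m) ∧ Filter.Tendsto t Filter.atTop (nhds 0) ∧
          (∀ m, xa m ∈ A) ∧ (∀ m, xb m ∈ B) ∧
          ∀ m, dist (xa m) xA ≤ t m * M ∧ dist (xb m) xB ≤ t m * M ∧
            dist (xa m) (xb m) ≤ dist xA xB - t m * η) :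
    ∃ K > 0, ∃ δ > 0, ∀ x ∈ Metric.ball xbar δ,
      EMetric.infEdist x (A ∩ B) ≤
        ENNReal.ofReal K * (EMetric.infEdist x A + EMetric.infEdist x B) := by
  obtain ⟨M, hMpos, δ, hδpos, η, hηpos, hTT⟩ := hM
  have hAne : A.Nonempty := ⟨xbar, hx.1⟩
  have hBne : B.Nonempty := ⟨xbar, hx.2⟩
  have hABne : (A ∩ B).Nonempty := ⟨xbar, hx⟩
  set K : ℝ := 1 + 4*M/η with hK
  have hKpos : 0 < K := by positivity
  set δ1 : ℝ := min (δ/12) (δ*η/(32*M)) with hδ1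
  have hδ1pos : 0 < δ1 := lt_min (by positivity) (by positivity)
  refine ⟨K, hKpos, δ1, hδ1pos, ?_⟩
  intro x hxball
  -- real-valued inequality
  have hreal : Metric.infDist x (A ∩ B) ≤ K * (Metric.infDist x A + Metric.infDist x B) := by
    set dA := Metric.infDist x A with hdA
    set dB := Metric.infDist x B with hdB
    have hdAnn : 0 ≤ dA := Metric.infDist_nonneg
    have hdBnn : 0 ≤ dB := Metric.infDist_nonneg
    have hdAlt : dA < δ1 := lt_of_le_of_lt (Metric.infDist_le_dist_of_mem hx.1) hxball
    have hdBlt : dB < δ1 := lt_of_le_of_lt (Metric.infDist_le_dist_of_mem hx.2) hxball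
    refine le_of_forall_pos_le_add ?_
    intro ε hε
    set C : ℝ := 1 + 8*M/η with hC
    have hCpos : 0 < C := by positivity
    set ε' : ℝ := min (ε/C) δ1 with hε'
    have hε'pos : 0 < ε' := lt_min (by positivity) hδ1pos
    have hε'le : ε' ≤ δ1 := min_le_right _ _
    obtain ⟨a0, ha0A, ha0d⟩ := (Metric.infDist_lt_iff hAne).1
      (lt_add_of_pos_right dA hε'pos)
    obtain ⟨b0, hb0B, hb0d⟩ := (Metric.infDist_lt_iff hBne).1
      (lt_add_of_pos_right dB hε'pos)
    have hxd : dist x xbar < δ1 := hxball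
    have hδ112 : δ1 ≤ δ/12 := min_le_left _ _
    have hδ132 : δ1 ≤ δ*η/(32*M) := min_le_right _ _
    have ha0b : dist a0 xbar ≤ δ/4 := by
      calc dist a0 xbar ≤ dist a0 x + dist x xbar := dist_triangle _ _ _
        _ ≤ (dA + ε') + δ1 := by
            rw [dist_comm a0 x]; exact add_le_add ha0d.le hxd.le
        _ ≤ δ1 + δ1 + δ1 := by linarith
        _ ≤ δ/4 := by linarith
    have hb0b : dist b0 xbar ≤ δ/4 := by
      calc dist b0 xbar ≤ dist b0 x + dist x xbar := dist_triangle _ _ _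
        _ ≤ (dB + ε') + δ1 := by
            rw [dist_comm b0 x]; exact add_le_add hb0d.le hxd.le
        _ ≤ δ1 + δ1 + δ1 := by linarith
        _ ≤ δ/4 := by linarith
    have hab : dist a0 b0 ≤ dA + dB + 2*ε' := by
      calc dist a0 b0 ≤ dist a0 x + dist x b0 := dist_triangle _ _ _
        _ ≤ (dA + ε') + (dB + ε') := by
            rw [dist_comm a0 x]; exact add_le_add ha0d.le hb0d.le
        _ = dA + dB + 2*ε' := by ring
    have hab4 : dist a0 b0 ≤ 4*δ1 := by linarith
    have hd0 : (4*M/η) * dist a0 b0 ≤ δ/2 := by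
      calc (4*M/η) * dist a0 b0 ≤ (4*M/η) * (4*δ1) := by
            apply mul_le_mul_of_nonneg_left hab4 (by positivity)
        _ ≤ (4*M/η) * (4*(δ*η/(32*M))) := by
            apply mul_le_mul_of_nonneg_left (by linarith) (by positivity)
        _ = δ/2 := by field_simp; ring
    obtain ⟨c, hcAB, hcd⟩ := key_lemma hA hB hMpos hδpos hηpos hTT ha0A hb0B ha0b hb0b hd0
    have h1 : Metric.infDist x (A ∩ B) ≤ dist x c := Metric.infDist_le_dist_of_mem hcAB
    have h2 : dist x c ≤ dist x a0 + dist a0 c := dist_triangle _ _ _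
    have h3 : dist a0 c ≤ (4*M/η) * (dA + dB + 2*ε') := by
      rw [dist_comm a0 c]
      refine hcd.trans (mul_le_mul_of_nonneg_left hab (by positivity))
    have h4 : C * ε' ≤ ε := by
      have : ε' ≤ ε/C := min_le_left _ _
      calc C * ε' ≤ C * (ε/C) := mul_le_mul_of_nonneg_left this hCpos.le
        _ = ε := by field_simp
    have h5 : dist x a0 ≤ dA + ε' := ha0d.le
    have hexp : dA + ε' + (4*M/η) * (dA + dB + 2*ε') = K*(dA+dB) - dB + C*ε' := by
      rw [hK, hC]; ring
    calc Metric.infDist x (A ∩ B) ≤ dist x a0 + dist a0 c := h1.trans h2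
      _ ≤ (dA + ε') + (4*M/η) * (dA + dB + 2*ε') := add_le_add h5 h3
      _ = K*(dA+dB) - dB + C*ε' := hexp
      _ ≤ K*(dA+dB) + ε := by linarith
  -- convert to ENNReal
  rw [infEdist_eq_ofReal' hABne, infEdist_eq_ofReal' hAne, infEdist_eq_ofReal' hBne,
    ← ENNReal.ofReal_add Metric.infDist_nonneg Metric.infDist_nonneg,
    ← ENNReal.ofReal_mul hKpos.le]
  exact ENNReal.ofReal_le_ofReal hreal

theorem sub_to_tang {X : Type*} [NormedAddCommGroup X] [NormedSpace ℝ X]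
    {A B : Set X} (hAc : Convex ℝ A) (hBc : Convex ℝ B) {xbar : X} (hx : xbar ∈ A ∩ B)
    (h : Subtrans A B xbar) : TangTrans A B xbar := by
  obtain ⟨K, hK, δ, hδ, hsub⟩ := h
  refine ⟨K + 2, by linarith, δ / 2, by linarith, 1, one_pos, ?_⟩
  rintro xA ⟨hxA1, hxA2⟩ xB ⟨hxB1, hxB2⟩ hne
  set d := dist xA xB with hd
  have hd0 : 0 < d := dist_pos.2 hne
  set x := midpoint ℝ xA xB with hxdef
  have hxball : x ∈ Metric.ball xbar δ := by
    have h1 : dist x (midpoint ℝ xbar xbar) ≤ (dist xA xbar + dist xB xbar) / 2 :=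
      dist_midpoint_midpoint_le _ _ _ _
    rw [midpoint_self] at h1
    have := mem_closedBall.1 hxA1
    have := mem_closedBall.1 hxB1
    rw [Metric.mem_ball]
    calc dist x xbar ≤ (dist xA xbar + dist xB xbar) / 2 := h1
      _ ≤ (δ/2 + δ/2)/2 := by gcongr
      _ < δ := by linarith
  have hdA : dist x xA = d / 2 := by
    have := dist_left_midpoint (𝕜 := ℝ) xA xB
    rw [dist_comm x xA, hxdef, this]
    simp [hd]
    norm_num
    ring
  have hdB : dist x xB = d / 2 := by
    have := dist_right_midpoint (𝕜 := ℝ) xA xB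
    rw [dist_comm x xB, hxdef, this]
    simp [hd]
    norm_num
    rw [dist_comm xA xB]
    ring
  -- find c ∈ A ∩ B close to x
  have hinf : EMetric.infEdist x (A ∩ B) < ENNReal.ofReal (K * d + d) := by
    refine lt_of_le_of_lt (hsub x hxball) ?_
    have h1 : EMetric.infEdist x A ≤ ENNReal.ofReal (d/2) := by
      refine le_trans (EMetric.infEdist_le_edist_of_mem hxA2) ?_
      rw [edist_dist, hdA]
    have h2 : EMetric.infEdist x B ≤ ENNReal.ofReal (d/2) := by
      refine le_trans (EMetric.infEdist_le_edist_of_mem hxB2) ?_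
      rw [edist_dist, hdB]
    calc ENNReal.ofReal K * (EMetric.infEdist x A + EMetric.infEdist x B)
        ≤ ENNReal.ofReal K * (ENNReal.ofReal (d/2) + ENNReal.ofReal (d/2)) := by gcongr
      _ = ENNReal.ofReal (K * d) := by
          rw [← ENNReal.ofReal_add (by linarith) (by linarith), ← ENNReal.ofReal_mul hK.le]
          norm_num
      _ < ENNReal.ofReal (K * d + d) := by
          apply ENNReal.ofReal_lt_ofReal_iff_of_nonneg (by positivity) |>.2
          linarith
  obtain ⟨c, hc, hcd⟩ := EMetric.infEdist_lt_iff.1 hinf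
  rw [edist_lt_ofReal] at hcd
  have hcA : dist xA c ≤ (K + 3/2) * d := by
    calc dist xA c ≤ dist xA x + dist x c := dist_triangle _ _ _
      _ ≤ d/2 + (K*d + d) := by rw [dist_comm xA x, hdA]; linarith
      _ = (K + 3/2) * d := by ring
  have hcB : dist xB c ≤ (K + 3/2) * d := by
    calc dist xB c ≤ dist xB x + dist x c := dist_triangle _ _ _
      _ ≤ d/2 + (K*d + d) := by rw [dist_comm xB x, hdB]; linarith
      _ = (K + 3/2) * d := by ring
  -- sequences
  refine ⟨fun m => d / (m + 2), fun m => xA + ((1:ℝ)/(m+2)) • (c - xA),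
    fun m => xB + ((1:ℝ)/(m+2)) • (c - xB), ?_, ?_, ?_, ?_, ?_⟩
  · intro m; positivity
  · have h2 : Filter.Tendsto (fun m : ℕ => ((m:ℝ) + 2)) Filter.atTop Filter.atTop := by
      apply Filter.tendsto_atTop_add_const_right
      exact tendsto_natCast_atTop_atTop
    exact Filter.Tendsto.div_atTop tendsto_const_nhds h2
  · intro m
    have hs1 : (0:ℝ) ≤ 1/(m+2) := by positivity
    have hs2 : (1:ℝ)/(m+2) ≤ 1 := by
      rw [div_le_one (by positivity)]; linarith [Nat.cast_nonneg (α := ℝ) m]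
    have := hAc hxA2 hc.1 (a := 1 - 1/(m+2)) (b := 1/(m+2)) (by linarith) hs1 (by ring)
    convert this using 1
    module
  · intro m
    have hs1 : (0:ℝ) ≤ 1/(m+2) := by positivity
    have hs2 : (1:ℝ)/(m+2) ≤ 1 := by
      rw [div_le_one (by positivity)]; linarith [Nat.cast_nonneg (α := ℝ) m]
    have := hBc hxB2 hc.2 (a := 1 - 1/(m+2)) (b := 1/(m+2)) (by linarith) hs1 (by ring)
    convert this using 1
    module
  · intro m
    have hm2 : (0:ℝ) < (m:ℝ) + 2 := by positivity
    have hsnn : (0:ℝ) ≤ 1/(m+2) := by positivity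
    refine ⟨?_, ?_, ?_⟩
    · rw [dist_eq_norm]
      have : xA + ((1:ℝ)/(m+2)) • (c - xA) - xA = ((1:ℝ)/(m+2)) • (c - xA) := by abel
      rw [this, norm_smul]
      simp only [Real.norm_eq_abs, abs_of_nonneg hsnn]
      rw [← dist_eq_norm, dist_comm c xA]
      calc (1/((m:ℝ)+2)) * dist xA c ≤ (1/((m:ℝ)+2)) * ((K + 3/2)*d) := by gcongr
        _ ≤ d/((m:ℝ)+2) * (K + 2) := by
            rw [div_mul_eq_mul_div d ((m:ℝ)+2) (K+2), div_mul_eq_mul_div 1 ((m:ℝ)+2) ((K+3/2)*d),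
              div_le_div_iff_of_pos_right hm2]
            nlinarith
    · rw [dist_eq_norm]
      have : xB + ((1:ℝ)/(m+2)) • (c - xB) - xB = ((1:ℝ)/(m+2)) • (c - xB) := by abel
      rw [this, norm_smul]
      simp only [Real.norm_eq_abs, abs_of_nonneg hsnn]
      rw [← dist_eq_norm, dist_comm c xB]
      calc (1/((m:ℝ)+2)) * dist xB c ≤ (1/((m:ℝ)+2)) * ((K + 3/2)*d) := by gcongr
        _ ≤ d/((m:ℝ)+2) * (K + 2) := by
            rw [div_mul_eq_mul_div d ((m:ℝ)+2) (K+2), div_mul_eq_mul_div 1 ((m:ℝ)+2) ((K+3/2)*d),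
              div_le_div_iff_of_pos_right hm2]
            nlinarith
    · have key : (xA + ((1:ℝ)/(m+2)) • (c - xA)) - (xB + ((1:ℝ)/(m+2)) • (c - xB))
          = ((1:ℝ) - 1/((m:ℝ)+2)) • (xA - xB) := by module
      rw [dist_eq_norm, key, norm_smul]
      have h1 : (1:ℝ) - 1/((m:ℝ)+2) ≥ 0 := by
        have : (1:ℝ)/(m+2) ≤ 1 := by
          rw [div_le_one hm2]; linarith [Nat.cast_nonneg (α := ℝ) m]
        linarith
      simp only [Real.norm_eq_abs, abs_of_nonneg h1]
      rw [← dist_eq_norm, ← hd]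
      have : (1 - 1/((m:ℝ)+2)) * d = d - d/(m+2) := by ring
      rw [this, mul_one]

theorem stmt13 {X : Type*} [NormedAddCommGroup X] [NormedSpace ℝ X] [CompleteSpace X]
    {A B : Set X} (hA : IsClosed A) (hB : IsClosed B)
    (hAc : Convex ℝ A) (hBc : Convex ℝ B) {xbar : X} (hx : xbar ∈ A ∩ B) :
    TangTrans A B xbar ↔ Subtrans A B xbar := by
  constructor
  · intro h
    exact tang_to_sub hA hB hx h
  · intro h
    exact sub_to_tang hAc hBc hx h
end

section
/- Let X be a normed space, let A and B be closed subsets of X, and let x̄ ∈ A ∩ B. If A and B satisfy property (P) at x̄, then A and B satisfy property (LT) at x̄. -/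
open Metric Set
open scoped ENNReal

/-- Property (LT) of closed sets `A`, `B` at a point `x0 ∈ A ∩ B`. -/
def PropLT {X : Type*} [MetricSpace X] (A B : Set X) (x0 : X) : Prop :=
  ∃ ε > 0, ∃ θ > 0,
    ∀ xA ∈ Metric.closedBall x0 ε ∩ (A \ B), ∀ xB ∈ Metric.closedBall x0 ε ∩ (B \ A),
      xA ≠ xB →
      ∃ t : ℕ → ℝ, ∃ xa : ℕ → X, ∃ xb : ℕ → X,
        (∀ m, 0 < t m) ∧ Filter.Tendsto t Filter.atTop (nhds 0) ∧
        (∀ m, xa m ∈ A) ∧ (∀ m, xb m ∈ B) ∧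
        ∀ m, dist (xa m) xA ≤ t m ∧ dist (xb m) xB ≤ t m ∧
          dist (xa m) (xb m) ≤ dist xA xB - t m * θ

/-- `tripleDist A B Ω = inf_{x ∈ Ω, a ∈ A, b ∈ B} max{‖x - a‖, ‖x - b‖}`,
with the convention that the infimum over the empty set is `+∞`. -/
noncomputable def tripleDist {X : Type*} [NormedAddCommGroup X] (A B Ω : Set X) : ℝ≥0∞ :=
  ⨅ x ∈ Ω, ⨅ a ∈ A, ⨅ b ∈ B, ENNReal.ofReal (max ‖x - a‖ ‖x - b‖)

/-- Property (P) of closed sets `A`, `B` at a point `x0 ∈ A ∩ B`. -/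
def PropP {X : Type*} [NormedAddCommGroup X] (A B : Set X) (x0 : X) : Prop :=
  ∃ α : ℝ, 0 < α ∧ α < 1 ∧ ∃ ε > 0,
    ∀ a ∈ (A \ B) ∩ Metric.ball x0 ε, ∀ b ∈ (B \ A) ∩ Metric.ball x0 ε,
      ∀ x ∈ Metric.ball x0 ε, ‖x - a‖ = ‖x - b‖ →
        ∀ δ > 0, ∃ ρ : ℝ, 0 < ρ ∧ ρ < δ ∧
          tripleDist (A ∩ Metric.ball a ((α + 1 / Real.sqrt ε) * ρ))
              (B ∩ Metric.ball b ((α + 1 / Real.sqrt ε) * ρ))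
              (Metric.ball x ρ) +
            ENNReal.ofReal (α * ρ) ≤ ENNReal.ofReal ‖x - a‖

theorem stmt14 {X : Type*} [NormedAddCommGroup X] [NormedSpace ℝ X]
    {A B : Set X} (hA : IsClosed A) (hB : IsClosed B) {xbar : X} (hx : xbar ∈ A ∩ B)
    (hP : PropP A B xbar) : PropLT A B xbar := by
  obtain ⟨α, hα0, hα1, ε, hε, hP⟩ := hP
  have hsqrt : 0 < Real.sqrt ε := Real.sqrt_pos.2 hε
  set C : ℝ := α + 1 / Real.sqrt ε with hCdef
  have hC0 : 0 < C := by positivity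
  refine ⟨ε / 2, by linarith, α / C, by positivity, ?_⟩
  rintro xA ⟨hxAball, hxAA, hxAB⟩ xB ⟨hxBball, hxBB, hxBA⟩ hne
  rw [Metric.mem_closedBall] at hxAball hxBball
  set d := dist xA xB with hd
  have hd0 : 0 < d := dist_pos.2 hne
  set x := (2⁻¹ : ℝ) • (xA + xB) with hxdef
  have hxa : x - xA = (2⁻¹ : ℝ) • (xB - xA) := by
    rw [hxdef]; module
  have hxb : x - xB = (2⁻¹ : ℝ) • (xA - xB) := by
    rw [hxdef]; module
  have hnxa : ‖x - xA‖ = d / 2 := by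
    rw [hxa, norm_smul, hd, dist_eq_norm, norm_sub_rev xB xA]
    simp; ring
  have hnxb : ‖x - xB‖ = d / 2 := by
    rw [hxb, norm_smul, hd, dist_eq_norm]
    simp; ring
  have heq : ‖x - xA‖ = ‖x - xB‖ := by rw [hnxa, hnxb]
  have hxmem : x ∈ Metric.ball xbar ε := by
    rw [Metric.mem_ball, dist_eq_norm]
    have hx2 : x - xbar = (2⁻¹ : ℝ) • ((xA - xbar) + (xB - xbar)) := by
      rw [hxdef]; module
    rw [hx2, norm_smul]
    have h1 : ‖(xA - xbar) + (xB - xbar)‖ ≤ ‖xA - xbar‖ + ‖xB - xbar‖ := norm_add_le _ _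
    rw [← dist_eq_norm, ← dist_eq_norm] at h1
    simp only [norm_inv, Real.norm_ofNat]
    nlinarith
  have hxAmem : xA ∈ (A \ B) ∩ Metric.ball xbar ε :=
    ⟨⟨hxAA, hxAB⟩, Metric.mem_ball.2 (lt_of_le_of_lt hxAball (by linarith))⟩
  have hxBmem : xB ∈ (B \ A) ∩ Metric.ball xbar ε :=
    ⟨⟨hxBB, hxBA⟩, Metric.mem_ball.2 (lt_of_le_of_lt hxBball (by linarith))⟩
  have key : ∀ m : ℕ, ∃ t : ℝ, 0 < t ∧ t ≤ C * (1 / (m + 1)) ∧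
      ∃ a ∈ A, ∃ b ∈ B, dist a xA ≤ t ∧ dist b xB ≤ t ∧
        dist a b ≤ d - t * (α / C) := by
    intro m
    have hδ : (0 : ℝ) < 1 / (m + 1) := by positivity
    obtain ⟨ρ, hρ0, hρδ, hmain⟩ := hP xA hxAmem xB hxBmem x hxmem heq _ hδ
    rw [hnxa] at hmain
    have hαρ : 0 < α * ρ := by positivity
    set S := A ∩ Metric.ball xA ((α + 1 / Real.sqrt ε) * ρ) with hS
    set T := B ∩ Metric.ball xB ((α + 1 / Real.sqrt ε) * ρ) with hT
    set Ω := Metric.ball x ρ with hΩ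
    have hfin : tripleDist S T Ω ≠ ⊤ :=
      ((le_self_add.trans hmain).trans_lt ENNReal.ofReal_lt_top).ne
    have hαρd : α * ρ ≤ d / 2 := by
      have h1 : ENNReal.ofReal (α * ρ) ≤ ENNReal.ofReal (d / 2) :=
        le_add_self.trans hmain
      rwa [ENNReal.ofReal_le_ofReal_iff (by linarith)] at h1
    have hlt : tripleDist S T Ω < ENNReal.ofReal (d / 2 - α * ρ / 2) := by
      have h2 : tripleDist S T Ω ≤ ENNReal.ofReal (d / 2) - ENNReal.ofReal (α * ρ) :=
        ENNReal.le_sub_of_add_le_right ENNReal.ofReal_ne_top hmain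
      calc tripleDist S T Ω
          < tripleDist S T Ω + ENNReal.ofReal (α * ρ / 2) :=
            ENNReal.lt_add_right hfin (by simp [ENNReal.ofReal_eq_zero]; linarith)
        _ ≤ (ENNReal.ofReal (d / 2) - ENNReal.ofReal (α * ρ)) + ENNReal.ofReal (α * ρ / 2) :=
            add_le_add h2 le_rfl
        _ = ENNReal.ofReal (d / 2 - α * ρ) + ENNReal.ofReal (α * ρ / 2) := by
            rw [ENNReal.ofReal_sub _ hαρ.le]
        _ = ENNReal.ofReal (d / 2 - α * ρ / 2) := by
            rw [← ENNReal.ofReal_add (by linarith) (by linarith)]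
            ring_nf
    rw [tripleDist] at hlt
    simp only [iInf_lt_iff] at hlt
    obtain ⟨x', hx', a, ha, b, hb, hmax⟩ := hlt
    have hmaxr : max ‖x' - a‖ ‖x' - b‖ < d / 2 - α * ρ / 2 := by
      rwa [ENNReal.ofReal_lt_ofReal_iff_of_nonneg
        ((norm_nonneg _).trans (le_max_left _ _))] at hmax
    refine ⟨C * ρ, by positivity, mul_le_mul_of_nonneg_left hρδ.le hC0.le, a, ha.1, b, hb.1, ?_, ?_, ?_⟩
    · exact (Metric.mem_ball.1 ha.2).le
    · exact (Metric.mem_ball.1 hb.2).le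
    · have h1 : ‖x' - a‖ < d / 2 - α * ρ / 2 := (le_max_left _ _).trans_lt hmaxr
      have h2 : ‖x' - b‖ < d / 2 - α * ρ / 2 := (le_max_right _ _).trans_lt hmaxr
      have h3 : dist a b ≤ ‖x' - a‖ + ‖x' - b‖ := by
        rw [dist_eq_norm]
        calc ‖a - b‖ = ‖(x' - b) - (x' - a)‖ := by congr 1; abel
          _ ≤ ‖x' - b‖ + ‖x' - a‖ := norm_sub_le _ _
          _ = ‖x' - a‖ + ‖x' - b‖ := by ring
      have hct : C * ρ * (α / C) = α * ρ := by
        field_simp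
      rw [hct]; linarith
  choose t ht0 htle a haA b hbB hta htb htab using key
  refine ⟨t, a, b, ht0, ?_, haA, hbB, fun m => ⟨hta m, htb m, htab m⟩⟩
  apply squeeze_zero (fun m => (ht0 m).le) htle
  have := (tendsto_one_div_add_atTop_nhds_zero_nat).const_mul C
  simpa using this
end

section
/- Let X be a real Hilbert space, let A and B be closed subsets of X, and let x̄ ∈ A ∩ B. If A and B satisfy property (LT) at x̄, then A and B satisfy property (P) at x̄. -/
open Metric Set
open scoped ENNReal

private lemma sq_le_imp {n K : ℝ} (hn : 0 ≤ n) (hK : 0 ≤ K) (h : n^2 ≤ K^2) : n ≤ K := by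
  by_contra hc
  push_neg at hc
  have h1 : K*K ≤ n*K := mul_le_mul_of_nonneg_right hc.le hK
  have h2 : n*K < n*n := mul_lt_mul_of_pos_left hc (lt_of_le_of_lt hK hc)
  nlinarith

set_option maxHeartbeats 1600000 in
theorem stmt15 {X : Type*} [NormedAddCommGroup X] [InnerProductSpace ℝ X] [CompleteSpace X]
    {A B : Set X} (hA : IsClosed A) (hB : IsClosed B) {xbar : X} (hx : xbar ∈ A ∩ B)
    (hLT : PropLT A B xbar) : PropP A B xbar := by
  obtain ⟨ε₀, hε₀, θ, hθ, hLT'⟩ := hLT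
  have h1θ : (0:ℝ) < 1 + θ := by linarith
  obtain ⟨α, hα_def⟩ : ∃ al : ℝ, θ / (30*(1+θ)) = al := ⟨_, rfl⟩
  have hα_pos : 0 < α := by rw [← hα_def]; positivity
  have h30 : 30*α*(1+θ) = θ := by rw [← hα_def]; field_simp
  have hα30 : 30*α ≤ θ := by nlinarith only [h30, mul_pos hα_pos hθ, hθ, hα_pos]
  have hα1 : 30*α < 1 := by nlinarith only [h30, mul_pos hα_pos hθ, hθ, hα_pos]
  obtain ⟨ε, hε_def⟩ : ∃ ee : ℝ, min (ε₀/2) ((θ/(100*(1+θ)))^2) = ee := ⟨_, rfl⟩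
  have hε_pos : 0 < ε := by rw [← hε_def]; exact lt_min (by linarith) (by positivity)
  have hεhalf : ε ≤ ε₀/2 := by rw [← hε_def]; exact min_le_left _ _
  have hsq_pos : 0 < Real.sqrt ε := Real.sqrt_pos.mpr hε_pos
  have hsqle : Real.sqrt ε ≤ θ/(100*(1+θ)) := by
    rw [← hε_def]
    have h := Real.sqrt_le_sqrt (min_le_right (ε₀/2) ((θ/(100*(1+θ)))^2))
    rwa [Real.sqrt_sq (by positivity)] at h
  obtain ⟨M, hM_def⟩ : ∃ mm : ℝ, α + 1/Real.sqrt ε = mm := ⟨_, rfl⟩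
  have hMinv : 100*(1+θ)/θ ≤ 1/Real.sqrt ε := by
    have h2 := one_div_le_one_div_of_le hsq_pos hsqle
    rwa [one_div_div] at h2
  have hM_ge : 100*(1+θ)/θ ≤ M := by
    rw [← hM_def]
    have : (0:ℝ) < 1/Real.sqrt ε := by positivity
    linarith only [this, hα_pos, hMinv]
  have hM100 : 100 ≤ M := by
    have h5 : (100:ℝ) ≤ 100*(1+θ)/θ := by
      rw [le_div_iff₀ hθ]; nlinarith only [hθ]
    linarith only [hM_ge, h5]
  have hM_pos : (0:ℝ) < M := by linarith only [hM100]
  have hMθ : 100 ≤ θ*M := by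
    have h2 := mul_le_mul_of_nonneg_left hM_ge hθ.le
    have h3 : θ*(100*(1+θ)/θ) = 100*(1+θ) := by field_simp
    nlinarith only [h2, h3, hθ]
  refine ⟨α, hα_pos, by linarith, ε, hε_pos, ?_⟩
  intro a ha b hb x hxball hxab δ hδ
  obtain ⟨⟨haA, haB⟩, haball⟩ := ha
  obtain ⟨⟨hbB, hbA⟩, hbball⟩ := hb
  obtain ⟨r, hr_def⟩ : ∃ r : ℝ, ‖x - a‖ = r := ⟨_, rfl⟩
  have hrb : ‖x - b‖ = r := by rw [← hxab]; exact hr_def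
  have hab : a ≠ b := fun h => haB (h ▸ hbB)
  have hr0 : 0 ≤ r := hr_def ▸ norm_nonneg (x - a)
  have hr_pos : 0 < r := by
    rcases hr0.lt_or_eq with h | h
    · exact h
    · exfalso
      have hxa : x = a := by
        have h1 : ‖x - a‖ = 0 := by rw [hr_def, ← h]
        rw [← sub_eq_zero]
        exact norm_eq_zero.mp h1
      have hxb : x = b := by
        have h1 : ‖x - b‖ = 0 := by rw [hrb, ← h]
        rw [← sub_eq_zero]
        exact norm_eq_zero.mp h1
      exact hab (hxa.symm.trans hxb)
  obtain ⟨c₀, hc0_def⟩ : ∃ c : ℝ, ‖a - b‖ = c := ⟨_, rfl⟩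
  have hc₀_pos : 0 < c₀ := by rw [← hc0_def]; exact norm_sub_pos_iff.mpr hab
  obtain ⟨D, hD_def⟩ : ∃ d : ℝ, ‖x - (2⁻¹:ℝ)•(a+b)‖ = d := ⟨_, rfl⟩
  have hD0 : 0 ≤ D := hD_def ▸ norm_nonneg _
  have hpar : r^2 = D^2 + c₀^2/4 := by
    have e1 : (x - (2⁻¹:ℝ)•(a+b)) + (2⁻¹:ℝ)•(a-b) = x - b := by module
    have e2 : (x - (2⁻¹:ℝ)•(a+b)) - (2⁻¹:ℝ)•(a-b) = x - a := by module
    have hq : ‖(2⁻¹:ℝ)•(a-b)‖ = c₀/2 := by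
      rw [norm_smul, Real.norm_eq_abs, abs_of_pos (by norm_num : (0:ℝ) < 2⁻¹), hc0_def]
      ring
    have hp := parallelogram_law_with_norm ℝ (x - (2⁻¹:ℝ)•(a+b)) ((2⁻¹:ℝ)•(a-b))
    rw [e1, e2, hq, hr_def, hrb, hD_def] at hp
    linarith only [hp]
  rcases le_or_gt (2*α*r) D with hDbig | hDsmall
  · -- Case A : pure move of x towards the midpoint
    have hD_pos : 0 < D := lt_of_lt_of_le (by positivity) hDbig
    obtain ⟨ρ, hρ_def⟩ : ∃ p : ℝ, min (δ/2) (α*r) = p := ⟨_, rfl⟩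
    have hρ_pos : 0 < ρ := by rw [← hρ_def]; exact lt_min (by linarith) (by positivity)
    have hρδ : ρ < δ := by
      have h := min_le_left (δ/2) (α*r); rw [hρ_def] at h; linarith only [h, hδ]
    have hραr : ρ ≤ α*r := by
      have h := min_le_right (δ/2) (α*r); rwa [hρ_def] at h
    have hsum3 : (x-a) + (x-b) = (2:ℝ)•(x - (2⁻¹:ℝ)•(a+b)) := by module
    have hipq : (inner ℝ (x-a) (x-b) : ℝ) = 2*D^2 - r^2 := by
      have h := norm_add_sq_real (x-a) (x-b)
      rw [hsum3, norm_smul, Real.norm_eq_abs, abs_of_pos (by norm_num : (0:ℝ) < 2), hD_def,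
        hr_def, hrb] at h
      linarith only [h]
    have hmid : x - (2⁻¹:ℝ)•(a+b) = (2⁻¹:ℝ)•((x-a)+(x-b)) := by module
    have hinner_a : (inner ℝ (x-a) (x - (2⁻¹:ℝ)•(a+b)) : ℝ) = D^2 := by
      rw [hmid, real_inner_smul_right, inner_add_right, real_inner_self_eq_norm_sq, hr_def, hipq]
      ring
    have hipq2 : (inner ℝ (x-b) (x-a) : ℝ) = 2*D^2 - r^2 := by
      rw [real_inner_comm]; exact hipq
    have hinner_b : (inner ℝ (x-b) (x - (2⁻¹:ℝ)•(a+b)) : ℝ) = D^2 := by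
      rw [hmid, real_inner_smul_right, inner_add_right, real_inner_self_eq_norm_sq, hrb, hipq2]
      ring
    obtain ⟨s, hs_def⟩ : ∃ s : ℝ, 3*ρ/(4*D) = s := ⟨_, rfl⟩
    have hs_pos : 0 < s := by rw [← hs_def]; positivity
    have hsD : s*D = 3*ρ/4 := by rw [← hs_def]; field_simp
    refine ⟨ρ, hρ_pos, hρδ, ?_⟩
    obtain ⟨x', hx'_def⟩ : ∃ y : X, x + s•((2⁻¹:ℝ)•(a+b) - x) = y := ⟨_, rfl⟩
    have hmnorm : ‖(2⁻¹:ℝ)•(a+b) - x‖ = D := by rw [norm_sub_rev]; exact hD_def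
    have hx'x : ‖x' - x‖ = 3*ρ/4 := by
      have e : x' - x = s•((2⁻¹:ℝ)•(a+b) - x) := by rw [← hx'_def]; abel
      rw [e, norm_smul, Real.norm_eq_abs, abs_of_pos hs_pos, hmnorm, hsD]
    have hxa2 : ‖x' - a‖^2 = r^2 - 2*(s*(D^2)) + (s*D)^2 := by
      have e : x' - a = (x - a) - s•(x - (2⁻¹:ℝ)•(a+b)) := by rw [← hx'_def]; module
      rw [e, norm_sub_sq_real, real_inner_smul_right, hinner_a, norm_smul, Real.norm_eq_abs,
        abs_of_pos hs_pos, hD_def, hr_def]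
    have hxb2 : ‖x' - b‖^2 = r^2 - 2*(s*(D^2)) + (s*D)^2 := by
      have e : x' - b = (x - b) - s•(x - (2⁻¹:ℝ)•(a+b)) := by rw [← hx'_def]; module
      rw [e, norm_sub_sq_real, real_inner_smul_right, hinner_b, norm_smul, Real.norm_eq_abs,
        abs_of_pos hs_pos, hD_def, hrb]
    have hkey : r^2 - 2*(s*(D^2)) + (s*D)^2 ≤ (r - α*ρ)^2 := by
      have h1 : s*(D^2) = (3*ρ/4)*D := by
        calc s*(D^2) = (s*D)*D := by ring
        _ = (3*ρ/4)*D := by rw [hsD]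
      rw [h1, hsD]
      nlinarith only [mul_le_mul_of_nonneg_right hDbig hρ_pos.le,
        mul_le_mul_of_nonneg_left hραr hρ_pos.le, mul_pos hα_pos hρ_pos,
        mul_pos hρ_pos hr_pos, hα_pos.le, hρ_pos.le, hα1]
    have hr_αρ : 0 ≤ r - α*ρ := by
      nlinarith only [mul_le_mul_of_nonneg_left hραr hα_pos.le, hα1, hα_pos, hρ_pos, hr_pos,
        mul_pos hα_pos hα_pos, mul_pos hα_pos hr_pos]
    have hna : ‖x' - a‖ ≤ r - α*ρ := by
      refine sq_le_imp (norm_nonneg _) hr_αρ ?_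
      rw [hxa2]; exact hkey
    have hnb : ‖x' - b‖ ≤ r - α*ρ := by
      refine sq_le_imp (norm_nonneg _) hr_αρ ?_
      rw [hxb2]; exact hkey
    have hmem_x' : x' ∈ ball x ρ := by
      rw [mem_ball, dist_eq_norm, hx'x]; linarith only [hρ_pos]
    have hmem_a : a ∈ A ∩ ball a ((α + 1/Real.sqrt ε)*ρ) :=
      ⟨haA, mem_ball_self (by positivity)⟩
    have hmem_b : b ∈ B ∩ ball b ((α + 1/Real.sqrt ε)*ρ) :=
      ⟨hbB, mem_ball_self (by positivity)⟩
    have htd : tripleDist (A ∩ ball a ((α + 1/Real.sqrt ε)*ρ))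
        (B ∩ ball b ((α + 1/Real.sqrt ε)*ρ)) (ball x ρ) ≤ ENNReal.ofReal (r - α*ρ) := by
      unfold tripleDist
      refine le_trans (iInf₂_le x' hmem_x')
        (le_trans (iInf₂_le a hmem_a) (le_trans (iInf₂_le b hmem_b) ?_))
      exact ENNReal.ofReal_le_ofReal (max_le hna hnb)
    have hfinal := add_le_add_left htd (ENNReal.ofReal (α*ρ))
    rw [← ENNReal.ofReal_add hr_αρ (by positivity : (0:ℝ) ≤ α*ρ)] at hfinal
    have he : r - α*ρ + α*ρ = r := by ring
    rw [he, ← hr_def] at hfinal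
    exact hfinal
  · -- Case B : chain construction using property (LT)
    obtain ⟨ga, hga_pos, hga⟩ : ∃ gg > 0, ∀ y ∈ B, gg ≤ dist a y := by
      obtain ⟨gg, hg, hsub⟩ := Metric.isOpen_iff.mp hB.isOpen_compl a haB
      refine ⟨gg, hg, fun y hy => ?_⟩
      by_contra hlt
      push_neg at hlt
      exact hsub (by rw [mem_ball, dist_comm]; exact hlt) hy
    obtain ⟨gb, hgb_pos, hgb⟩ : ∃ gg > 0, ∀ y ∈ A, gg ≤ dist b y := by
      obtain ⟨gg, hg, hsub⟩ := Metric.isOpen_iff.mp hA.isOpen_compl b hbA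
      refine ⟨gg, hg, fun y hy => ?_⟩
      by_contra hlt
      push_neg at hlt
      exact hsub (by rw [mem_ball, dist_comm]; exact hlt) hy
    obtain ⟨K, hK_def⟩ : ∃ k : ℝ, M^2*(θ^2+100) = k := ⟨_, rfl⟩
    have hK_pos : 0 < K := by rw [← hK_def]; positivity
    obtain ⟨ρ, hρ_def⟩ : ∃ p : ℝ,
        (1/2) * min δ (min (r/K) (min (ga/M) (min (gb/M) (ε₀/(4*M))))) = p := ⟨_, rfl⟩
    have hmin_pos : 0 < min δ (min (r/K) (min (ga/M) (min (gb/M) (ε₀/(4*M))))) :=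
      lt_min hδ (lt_min (div_pos hr_pos hK_pos) (lt_min (div_pos hga_pos hM_pos)
        (lt_min (div_pos hgb_pos hM_pos) (div_pos (by linarith) (by linarith)))))
    have hρ_pos : 0 < ρ := by rw [← hρ_def]; exact mul_pos (by norm_num) hmin_pos
    have hm1 : min δ (min (r/K) (min (ga/M) (min (gb/M) (ε₀/(4*M))))) ≤ δ := min_le_left _ _
    have hm2 : min δ (min (r/K) (min (ga/M) (min (gb/M) (ε₀/(4*M))))) ≤ r/K :=
      le_trans (min_le_right _ _) (min_le_left _ _)
    have hm3 : min δ (min (r/K) (min (ga/M) (min (gb/M) (ε₀/(4*M))))) ≤ ga/M :=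
      le_trans (min_le_right _ _) (le_trans (min_le_right _ _) (min_le_left _ _))
    have hm4 : min δ (min (r/K) (min (ga/M) (min (gb/M) (ε₀/(4*M))))) ≤ gb/M :=
      le_trans (min_le_right _ _) (le_trans (min_le_right _ _)
        (le_trans (min_le_right _ _) (min_le_left _ _)))
    have hm5 : min δ (min (r/K) (min (ga/M) (min (gb/M) (ε₀/(4*M))))) ≤ ε₀/(4*M) :=
      le_trans (min_le_right _ _) (le_trans (min_le_right _ _)
        (le_trans (min_le_right _ _) (min_le_right _ _)))
    have hρδ : ρ < δ := by rw [← hρ_def]; linarith only [hmin_pos, hm1]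
    have hρK : K*ρ ≤ r/2 := by
      have h2 : 2*ρ ≤ r/K := by rw [← hρ_def]; linarith only [hm2]
      have h3 := mul_le_mul_of_nonneg_left h2 hK_pos.le
      have h4 : K*(r/K) = r := by field_simp
      linarith only [h3, h4]
    have hMρga : M*ρ ≤ ga/2 := by
      have h2 : 2*ρ ≤ ga/M := by rw [← hρ_def]; linarith only [hm3]
      have h3 := mul_le_mul_of_nonneg_left h2 hM_pos.le
      have h4 : M*(ga/M) = ga := by field_simp
      linarith only [h3, h4]
    have hMρgb : M*ρ ≤ gb/2 := by
      have h2 : 2*ρ ≤ gb/M := by rw [← hρ_def]; linarith only [hm4]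
      have h3 := mul_le_mul_of_nonneg_left h2 hM_pos.le
      have h4 : M*(gb/M) = gb := by field_simp
      linarith only [h3, h4]
    have hMρε : M*ρ ≤ ε₀/8 := by
      have h2 : 2*ρ ≤ ε₀/(4*M) := by rw [← hρ_def]; linarith only [hm5]
      have h3 := mul_le_mul_of_nonneg_left h2 hM_pos.le
      have h4 : M*(ε₀/(4*M)) = ε₀/4 := by field_simp
      linarith only [h3, h4]
    have hK200 : 200 ≤ K := by
      have h1 : (100:ℝ)*100 ≤ M*M := mul_le_mul hM100 hM100 (by norm_num) (by linarith)
      nlinarith only [hK_def, h1, mul_nonneg (mul_nonneg hM_pos.le hM_pos.le) (sq_nonneg θ), sq_nonneg θ]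
    have hρr : 200*ρ ≤ r := by
      have h1 := mul_le_mul_of_nonneg_right hK200 hρ_pos.le
      linarith only [h1, hρK, hρ_pos]
    refine ⟨ρ, hρ_pos, hρδ, ?_⟩
    -- the chain
    let Qp : X×X → Prop := fun w => w.1 ∈ A ∧ w.2 ∈ B ∧
      θ*‖w.1 - a‖ ≤ c₀ - ‖w.1 - w.2‖ ∧ θ*‖w.2 - b‖ ≤ c₀ - ‖w.1 - w.2‖ ∧
      ‖w.1 - a‖ ≤ M*ρ/2 ∧ ‖w.2 - b‖ ≤ M*ρ/2
    let Rp : X×X → X×X → Prop := fun w w' =>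
      θ*‖w'.1 - w.1‖ ≤ ‖w.1 - w.2‖ - ‖w'.1 - w'.2‖ ∧
      θ*‖w'.2 - w.2‖ ≤ ‖w.1 - w.2‖ - ‖w'.1 - w'.2‖
    let Simg : X×X → Set ℝ := fun w =>
      (fun w' : X×X => ‖w'.1 - w'.2‖) '' {w' : X×X | Qp w' ∧ Rp w w'}
    have hRrefl : ∀ w, Rp w w := fun w => ⟨by simp, by simp⟩
    have hRtrans : ∀ w1 w2 w3 : X×X, Rp w1 w2 → Rp w2 w3 → Rp w1 w3 := by
      intro w1 w2 w3 h12 h23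
      obtain ⟨ha12, hb12⟩ := h12
      obtain ⟨ha23, hb23⟩ := h23
      constructor
      · have htri := norm_add_le (w3.1 - w2.1) (w2.1 - w1.1)
        rw [sub_add_sub_cancel] at htri
        nlinarith only [mul_le_mul_of_nonneg_left htri hθ.le, ha12, ha23]
      · have htri := norm_add_le (w3.2 - w2.2) (w2.2 - w1.2)
        rw [sub_add_sub_cancel] at htri
        nlinarith only [mul_le_mul_of_nonneg_left htri hθ.le, hb12, hb23]
    have hQab : Qp (a, b) := by
      refine ⟨haA, hbB, ?_, ?_, ?_, ?_⟩
      · show θ*‖a - a‖ ≤ c₀ - ‖a - b‖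
        rw [hc0_def]; simp
      · show θ*‖b - b‖ ≤ c₀ - ‖a - b‖
        rw [hc0_def]; simp
      · show ‖a - a‖ ≤ M*ρ/2
        simp; positivity
      · show ‖b - b‖ ≤ M*ρ/2
        simp; positivity
    have hbddS : ∀ w : X×X, BddBelow (Simg w) := by
      intro w
      refine ⟨0, ?_⟩
      rintro y ⟨w', _, rfl⟩
      exact norm_nonneg _
    have hstep : ∀ (n:ℕ) (w : X×X), Qp w → ∃ w' : X×X, (Qp w' ∧ Rp w w') ∧
        ‖w'.1 - w'.2‖ < sInf (Simg w) + 1/((n:ℝ)+1) := by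
      intro n w hw
      have hne : (Simg w).Nonempty := ⟨‖w.1 - w.2‖, ⟨w, ⟨hw, hRrefl w⟩, rfl⟩⟩
      have hlt : sInf (Simg w) < sInf (Simg w) + 1/((n:ℝ)+1) := by
        have : (0:ℝ) < 1/((n:ℝ)+1) := by positivity
        linarith only [this]
      obtain ⟨y, hy, hylt⟩ := exists_lt_of_csInf_lt hne hlt
      obtain ⟨w', hw', rfl⟩ := hy
      exact ⟨w', hw', hylt⟩
    choose f hf1 hf2 using hstep
    let g : ℕ → {w : X×X // Qp w} := fun n => Nat.rec (motive := fun _ => {w : X×X // Qp w})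
      ⟨(a,b), hQab⟩ (fun k p => ⟨f k p.1 p.2, (hf1 k p.1 p.2).1⟩) n
    let u : ℕ → X := fun n => (g n).1.1
    let v : ℕ → X := fun n => (g n).1.2
    have hQn : ∀ n, u n ∈ A ∧ v n ∈ B ∧ θ*‖u n - a‖ ≤ c₀ - ‖u n - v n‖ ∧
        θ*‖v n - b‖ ≤ c₀ - ‖u n - v n‖ ∧ ‖u n - a‖ ≤ M*ρ/2 ∧ ‖v n - b‖ ≤ M*ρ/2 :=
      fun n => (g n).2
    have hgR : ∀ n, Rp (g n).1 (g (n+1)).1 := fun n => (hf1 n (g n).1 (g n).2).2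
    have hgopt : ∀ n, ‖u (n+1) - v (n+1)‖ < sInf (Simg (g n).1) + 1/((n:ℝ)+1) :=
      fun n => hf2 n (g n).1 (g n).2
    have hgRle : ∀ n m, n ≤ m → Rp (g n).1 (g m).1 := by
      intro n m h
      induction m, h using Nat.le_induction with
      | base => exact hRrefl _
      | succ m hm ih => exact hRtrans _ _ _ ih (hgR m)
    have hgRle' : ∀ n m, n ≤ m → θ*‖u m - u n‖ ≤ ‖u n - v n‖ - ‖u m - v m‖ ∧
        θ*‖v m - v n‖ ≤ ‖u n - v n‖ - ‖u m - v m‖ := fun n m h => hgRle n m h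
    have hcle : ∀ n m, n ≤ m → ‖u m - v m‖ ≤ ‖u n - v n‖ := by
      intro n m h
      have h1 := (hgRle' n m h).1
      linarith only [h1, mul_nonneg hθ.le (norm_nonneg (u m - u n))]
    have hbddr : BddBelow (Set.range (fun n => ‖u n - v n‖)) := by
      refine ⟨0, ?_⟩
      rintro y ⟨n, rfl⟩
      exact norm_nonneg _
    obtain ⟨L, hL_def⟩ : ∃ l : ℝ, (⨅ n, ‖u n - v n‖) = l := ⟨_, rfl⟩
    have hc_anti : Antitone (fun n => ‖u n - v n‖) :=
      antitone_nat_of_succ_le (fun n => hcle n (n+1) (Nat.le_succ n))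
    have hc_tend : Filter.Tendsto (fun n => ‖u n - v n‖) Filter.atTop (nhds L) := by
      have h := tendsto_atTop_ciInf hc_anti hbddr
      rwa [hL_def] at h
    have hLle : ∀ n, L ≤ ‖u n - v n‖ := by
      intro n; rw [← hL_def]; exact ciInf_le hbddr n
    have hL0 : 0 ≤ L := by rw [← hL_def]; exact le_ciInf (fun n => norm_nonneg _)
    have hdist_u : ∀ N n m, N ≤ n → n ≤ m → dist (u n) (u m) ≤ (‖u N - v N‖ - L)/θ := by
      intro N n m hn hm
      rw [dist_eq_norm, norm_sub_rev, le_div_iff₀ hθ]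
      have h1 := (hgRle' n m hm).1
      have h2 := hcle N n hn
      have h3 := hLle m
      linarith only [h1, h2, h3]
    have hdist_v : ∀ N n m, N ≤ n → n ≤ m → dist (v n) (v m) ≤ (‖u N - v N‖ - L)/θ := by
      intro N n m hn hm
      rw [dist_eq_norm, norm_sub_rev, le_div_iff₀ hθ]
      have h1 := (hgRle' n m hm).2
      have h2 := hcle N n hn
      have h3 := hLle m
      linarith only [h1, h2, h3]
    have htend0 : Filter.Tendsto (fun N => (‖u N - v N‖ - L)/θ) Filter.atTop (nhds 0) := by
      have h := (hc_tend.sub (tendsto_const_nhds :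
        Filter.Tendsto (fun _ : ℕ => L) Filter.atTop (nhds L))).div_const θ
      simpa using h
    have hcau_u : CauchySeq u := by
      apply cauchySeq_of_le_tendsto_0 (fun N => (‖u N - v N‖ - L)/θ) ?_ htend0
      intro n m N hn hm
      rcases le_total n m with h | h
      · exact hdist_u N n m hn h
      · rw [dist_comm]; exact hdist_u N m n hm h
    have hcau_v : CauchySeq v := by
      apply cauchySeq_of_le_tendsto_0 (fun N => (‖u N - v N‖ - L)/θ) ?_ htend0
      intro n m N hn hm
      rcases le_total n m with h | h
      · exact hdist_v N n m hn h
      · rw [dist_comm]; exact hdist_v N m n hm h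
    obtain ⟨uL, hu_tend⟩ := cauchySeq_tendsto_of_complete hcau_u
    obtain ⟨vL, hv_tend⟩ := cauchySeq_tendsto_of_complete hcau_v
    have huA : uL ∈ A := hA.mem_of_tendsto hu_tend (Filter.Eventually.of_forall fun n => (hQn n).1)
    have hvB : vL ∈ B := hB.mem_of_tendsto hv_tend
      (Filter.Eventually.of_forall fun n => (hQn n).2.1)
    have hnorm_tend : Filter.Tendsto (fun n => ‖u n - v n‖) Filter.atTop (nhds ‖uL - vL‖) :=
      ((hu_tend.sub hv_tend).norm)
    have hLeq : ‖uL - vL‖ = L := tendsto_nhds_unique hnorm_tend hc_tend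
    have hu_a : θ*‖uL - a‖ ≤ c₀ - L := by
      have h1 : Filter.Tendsto (fun n => θ*‖u n - a‖) Filter.atTop (nhds (θ*‖uL - a‖)) :=
        (((hu_tend.sub tendsto_const_nhds).norm).const_mul θ)
      have h2 : Filter.Tendsto (fun n => c₀ - ‖u n - v n‖) Filter.atTop (nhds (c₀ - L)) :=
        tendsto_const_nhds.sub hc_tend
      exact le_of_tendsto_of_tendsto' h1 h2 (fun n => (hQn n).2.2.1)
    have hv_b : θ*‖vL - b‖ ≤ c₀ - L := by
      have h1 : Filter.Tendsto (fun n => θ*‖v n - b‖) Filter.atTop (nhds (θ*‖vL - b‖)) :=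
        (((hv_tend.sub tendsto_const_nhds).norm).const_mul θ)
      have h2 : Filter.Tendsto (fun n => c₀ - ‖u n - v n‖) Filter.atTop (nhds (c₀ - L)) :=
        tendsto_const_nhds.sub hc_tend
      exact le_of_tendsto_of_tendsto' h1 h2 (fun n => (hQn n).2.2.2.1)
    have hu_cap : ‖uL - a‖ ≤ M*ρ/2 :=
      le_of_tendsto ((hu_tend.sub tendsto_const_nhds).norm)
        (Filter.Eventually.of_forall fun n => (hQn n).2.2.2.2.1)
    have hv_cap : ‖vL - b‖ ≤ M*ρ/2 :=
      le_of_tendsto ((hv_tend.sub tendsto_const_nhds).norm)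
        (Filter.Eventually.of_forall fun n => (hQn n).2.2.2.2.2)
    have hgRlim : ∀ n, θ*‖uL - u n‖ ≤ ‖u n - v n‖ - ‖uL - vL‖ ∧
        θ*‖vL - v n‖ ≤ ‖u n - v n‖ - ‖uL - vL‖ := by
      intro n
      rw [hLeq]
      constructor
      · have h1 : Filter.Tendsto (fun m => θ*‖u m - u n‖) Filter.atTop
            (nhds (θ*‖uL - u n‖)) := (((hu_tend.sub tendsto_const_nhds).norm).const_mul θ)
        have h2 : Filter.Tendsto (fun m => ‖u n - v n‖ - ‖u m - v m‖) Filter.atTop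
            (nhds (‖u n - v n‖ - L)) := tendsto_const_nhds.sub hc_tend
        refine le_of_tendsto_of_tendsto h1 h2 ?_
        filter_upwards [Filter.eventually_ge_atTop n] with m hm
        exact (hgRle' n m hm).1
      · have h1 : Filter.Tendsto (fun m => θ*‖v m - v n‖) Filter.atTop
            (nhds (θ*‖vL - v n‖)) := (((hv_tend.sub tendsto_const_nhds).norm).const_mul θ)
        have h2 : Filter.Tendsto (fun m => ‖u n - v n‖ - ‖u m - v m‖) Filter.atTop
            (nhds (‖u n - v n‖ - L)) := tendsto_const_nhds.sub hc_tend
        refine le_of_tendsto_of_tendsto h1 h2 ?_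
        filter_upwards [Filter.eventually_ge_atTop n] with m hm
        exact (hgRle' n m hm).2
    -- the main dichotomy: the limit pair realizes the decrease
    have hwin : L ≤ c₀ - θ*(M*ρ/8) := by
      by_contra hcon
      push_neg at hcon
      have hu_pert : ‖uL - a‖ < M*ρ/8 := by nlinarith only [hu_a, hcon, hθ]
      have hv_pert : ‖vL - b‖ < M*ρ/8 := by nlinarith only [hv_b, hcon, hθ]
      have hu_notB : uL ∉ B := by
        intro hmem
        have h1 : ga ≤ ‖uL - a‖ := by
          have h := hga uL hmem
          rwa [dist_eq_norm, norm_sub_rev] at h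
        linarith only [h1, hu_pert, hMρga, hga_pos, mul_pos hM_pos hρ_pos]
      have hv_notA : vL ∉ A := by
        intro hmem
        have h1 : gb ≤ ‖vL - b‖ := by
          have h := hgb vL hmem
          rwa [dist_eq_norm, norm_sub_rev] at h
        linarith only [h1, hv_pert, hMρgb, hgb_pos, mul_pos hM_pos hρ_pos]
      have haxbar : dist a xbar < ε := mem_ball.mp haball
      have hbxbar : dist b xbar < ε := mem_ball.mp hbball
      have hu_ball : uL ∈ closedBall xbar ε₀ := by
        rw [mem_closedBall]
        have h1 : dist uL a ≤ M*ρ/2 := by rw [dist_eq_norm]; exact hu_cap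
        have h2 := dist_triangle uL a xbar
        have h3 : ε ≤ ε₀/2 := hεhalf
        linarith only [h1, h2, h3, hMρε, haxbar, hε₀]
      have hv_ball : vL ∈ closedBall xbar ε₀ := by
        rw [mem_closedBall]
        have h1 : dist vL b ≤ M*ρ/2 := by rw [dist_eq_norm]; exact hv_cap
        have h2 := dist_triangle vL b xbar
        have h3 : ε ≤ ε₀/2 := hεhalf
        linarith only [h1, h2, h3, hMρε, hbxbar, hε₀]
      have hne : uL ≠ vL := fun h => hu_notB (h ▸ hvB)
      obtain ⟨t, xa, xb, ht_pos, ht0, hxaA, hxbB, hLTm⟩ :=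
        hLT' uL ⟨hu_ball, huA, hu_notB⟩ vL ⟨hv_ball, hvB, hv_notA⟩ hne
      obtain ⟨m, hm⟩ := (ht0.eventually_lt_const (by positivity : (0:ℝ) < M*ρ/4)).exists
      obtain ⟨hd1, hd2, hd3⟩ := hLTm m
      have hna : ‖xa m - uL‖ ≤ t m := by rwa [dist_eq_norm] at hd1
      have hnb : ‖xb m - vL‖ ≤ t m := by rwa [dist_eq_norm] at hd2
      have hc' : ‖xa m - xb m‖ ≤ L - t m * θ := by
        have h := hd3
        rw [dist_eq_norm, dist_eq_norm, hLeq] at h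
        exact h
      have htriA : ‖xa m - a‖ ≤ ‖xa m - uL‖ + ‖uL - a‖ := by
        have h := norm_add_le (xa m - uL) (uL - a)
        rwa [sub_add_sub_cancel] at h
      have htriB : ‖xb m - b‖ ≤ ‖xb m - vL‖ + ‖vL - b‖ := by
        have h := norm_add_le (xb m - vL) (vL - b)
        rwa [sub_add_sub_cancel] at h
      have hw'Q : Qp (xa m, xb m) := by
        refine ⟨hxaA m, hxbB m, ?_, ?_, ?_, ?_⟩
        · show θ*‖xa m - a‖ ≤ c₀ - ‖xa m - xb m‖
          linarith only [mul_le_mul_of_nonneg_left htriA hθ.le,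
            mul_le_mul_of_nonneg_left hna hθ.le, hu_a, hc', mul_pos (ht_pos m) hθ]
        · show θ*‖xb m - b‖ ≤ c₀ - ‖xa m - xb m‖
          linarith only [mul_le_mul_of_nonneg_left htriB hθ.le,
            mul_le_mul_of_nonneg_left hnb hθ.le, hv_b, hc', mul_pos (ht_pos m) hθ]
        · show ‖xa m - a‖ ≤ M*ρ/2
          linarith only [htriA, hna, hm, hu_pert, mul_pos hM_pos hρ_pos]
        · show ‖xb m - b‖ ≤ M*ρ/2
          linarith only [htriB, hnb, hm, hv_pert, mul_pos hM_pos hρ_pos]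
      have hRw' : Rp (uL, vL) (xa m, xb m) := by
        constructor
        · show θ*‖xa m - uL‖ ≤ ‖uL - vL‖ - ‖xa m - xb m‖
          rw [hLeq]
          linarith only [mul_le_mul_of_nonneg_left hna hθ.le, hc', mul_pos (ht_pos m) hθ]
        · show θ*‖xb m - vL‖ ≤ ‖uL - vL‖ - ‖xa m - xb m‖
          rw [hLeq]
          linarith only [mul_le_mul_of_nonneg_left hnb hθ.le, hc', mul_pos (ht_pos m) hθ]
      have hLlec : L ≤ ‖xa m - xb m‖ := by
        by_contra hc2
        push_neg at hc2
        obtain ⟨n, hn⟩ := exists_nat_one_div_lt (sub_pos.mpr hc2)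
        have hRchain : Rp (g n).1 (xa m, xb m) :=
          hRtrans _ _ _ (⟨(hgRlim n).1, (hgRlim n).2⟩ : Rp (g n).1 (uL, vL)) hRw'
        have h1 : sInf (Simg (g n).1) ≤ ‖xa m - xb m‖ :=
          csInf_le (hbddS _) ⟨(xa m, xb m), ⟨hw'Q, hRchain⟩, rfl⟩
        have h2 := hgopt n
        have h3 := hLle (n+1)
        linarith only [h1, h2, h3, hn]
      linarith only [hc', hLlec, mul_pos (ht_pos m) hθ]
    -- conclusion from the limit pair
    have hE : ‖x - (2⁻¹:ℝ)•(uL+vL)‖ ≤ D + M*ρ/2 := by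
      have e : x - (2⁻¹:ℝ)•(uL+vL) =
          (x - (2⁻¹:ℝ)•(a+b)) + (2⁻¹:ℝ)•((a - uL) + (b - vL)) := by module
      rw [e]
      refine le_trans (norm_add_le _ _) ?_
      have h1 : ‖(2⁻¹:ℝ)•((a-uL)+(b-vL))‖ ≤ M*ρ/2 := by
        rw [norm_smul, Real.norm_eq_abs, abs_of_pos (by norm_num : (0:ℝ) < 2⁻¹)]
        have h2 := norm_add_le (a-uL) (b-vL)
        have h3 : ‖a-uL‖ = ‖uL-a‖ := norm_sub_rev _ _
        have h4 : ‖b-vL‖ = ‖vL-b‖ := norm_sub_rev _ _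
        linarith only [h2, h3, h4, hu_cap, hv_cap]
      rw [hD_def]
      linarith only [h1]
    have hpar2 : ‖x - uL‖^2 + ‖x - vL‖^2 = 2*‖x - (2⁻¹:ℝ)•(uL+vL)‖^2 + ‖uL - vL‖^2/2 := by
      have e1 : (x - (2⁻¹:ℝ)•(uL+vL)) + (2⁻¹:ℝ)•(vL - uL) = x - uL := by module
      have e2 : (x - (2⁻¹:ℝ)•(uL+vL)) - (2⁻¹:ℝ)•(vL - uL) = x - vL := by module
      have hq : ‖(2⁻¹:ℝ)•(vL - uL)‖ = ‖uL - vL‖/2 := by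
        rw [norm_smul, Real.norm_eq_abs, abs_of_pos (by norm_num : (0:ℝ) < 2⁻¹), norm_sub_rev]
        ring
      have hp := parallelogram_law_with_norm ℝ (x - (2⁻¹:ℝ)•(uL+vL)) ((2⁻¹:ℝ)•(vL - uL))
      rw [e1, e2, hq] at hp
      linarith only [hp]
    have hDθ : 15*D ≤ θ*r := by
      linarith only [mul_le_mul_of_nonneg_right hα30 hr_pos.le, hDsmall.le]
    have hc19 : 19*r ≤ 10*c₀ := by
      have hD15 : 15*D ≤ r := by
        linarith only [hDsmall.le, mul_lt_mul_of_pos_right hα1 hr_pos]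
      have hD2 : 225*D^2 ≤ r^2 := by nlinarith only [hD15, hD0, hr_pos.le]
      have h100 : 361*r^2 ≤ 100*c₀^2 := by linarith only [hpar, hD2, sq_nonneg r]
      have h19 := sq_le_imp (by linarith only [hr_pos] : (0:ℝ) ≤ 19*r)
        (by linarith only [hc₀_pos] : (0:ℝ) ≤ 10*c₀) (by linarith only [h100] : (19*r)^2 ≤ (10*c₀)^2)
      linarith only [h19]
    have hkey : (D + M*ρ/2)^2 + (c₀ - θ*(M*ρ/8))^2/4 ≤ (r - 2*ρ)^2 := by
      have e1 : D*(M*ρ) ≤ (θ*r)*(M*ρ)/15 := by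
        have h := mul_le_mul_of_nonneg_right hDθ (mul_nonneg hM_pos.le hρ_pos.le)
        linarith only [h]
      have e2 : (19*r)*(θ*(M*ρ)) ≤ (10*c₀)*(θ*(M*ρ)) :=
        mul_le_mul_of_nonneg_right hc19 (by positivity)
      have e3 : (100:ℝ)*(r*ρ) ≤ (θ*M)*(r*ρ) :=
        mul_le_mul_of_nonneg_right hMθ (by positivity)
      have e4 : (K*ρ)*ρ ≤ (r/2)*ρ := mul_le_mul_of_nonneg_right hρK hρ_pos.le
      have e4' : ((M^2*(θ^2+100))*ρ)*ρ ≤ (r/2)*ρ := by rw [hK_def]; exact e4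
      linarith only [e1, e2, e3, e4', hpar, sq_nonneg ρ, mul_nonneg hr_pos.le hρ_pos.le,
        sq_nonneg (M*ρ)]
    have hr2ρ : (0:ℝ) ≤ r - 2*ρ := by linarith only [hρr, hρ_pos]
    have hE2 : ‖x - (2⁻¹:ℝ)•(uL+vL)‖^2 ≤ (D + M*ρ/2)^2 :=
      pow_le_pow_left₀ (norm_nonneg _) hE 2
    have hL2 : ‖uL - vL‖^2 ≤ (c₀ - θ*(M*ρ/8))^2 := by
      refine pow_le_pow_left₀ (norm_nonneg _) ?_ 2
      rw [hLeq]; exact hwin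
    have hside : ‖x - uL‖ ≤ r - 2*ρ ∨ ‖x - vL‖ ≤ r - 2*ρ := by
      rcases le_total ‖x - uL‖ ‖x - vL‖ with hle | hle
      · left
        refine sq_le_imp (norm_nonneg _) hr2ρ ?_
        linarith only [hpar2, hE2, hL2, hkey, mul_self_le_mul_self (norm_nonneg (x - uL)) hle]
      · right
        refine sq_le_imp (norm_nonneg _) hr2ρ ?_
        linarith only [hpar2, hE2, hL2, hkey, mul_self_le_mul_self (norm_nonneg (x - vL)) hle]
    have hαhalf : α*ρ ≤ ρ/2 := by nlinarith only [hα1, hρ_pos, hα_pos]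
    have hr_αρ : (0:ℝ) ≤ r - α*ρ := by linarith only [hαhalf, hρr, hρ_pos]
    rcases hside with hs | hs
    · -- use the pair (uL, b) and move x towards b
      obtain ⟨x', hx'_def⟩ : ∃ y : X, x + (ρ/(2*r))•(b - x) = y := ⟨_, rfl⟩
      have hbx : ‖b - x‖ = r := by rw [norm_sub_rev]; exact hrb
      have hx'x : ‖x' - x‖ = ρ/2 := by
        have e : x' - x = (ρ/(2*r))•(b - x) := by rw [← hx'_def]; abel
        rw [e, norm_smul, Real.norm_eq_abs, abs_of_pos (by positivity), hbx]
        field_simp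
      have hx'b : ‖x' - b‖ = r - ρ/2 := by
        have e : x' - b = (1 - ρ/(2*r))•(x - b) := by rw [← hx'_def]; module
        have hcoef : (0:ℝ) ≤ 1 - ρ/(2*r) := by
          rw [sub_nonneg, div_le_one (by positivity)]
          linarith only [hρr, hr_pos]
        rw [e, norm_smul, Real.norm_eq_abs, abs_of_nonneg hcoef, hrb]
        field_simp
      have hmaxu : ‖x' - uL‖ ≤ r - α*ρ := by
        have htri : ‖x' - uL‖ ≤ ‖x' - x‖ + ‖x - uL‖ := by
          have h := norm_add_le (x' - x) (x - uL)
          rwa [sub_add_sub_cancel] at h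
        rw [hx'x] at htri
        linarith only [htri, hs, hαhalf, hρ_pos]
      have hmaxb : ‖x' - b‖ ≤ r - α*ρ := by rw [hx'b]; linarith only [hαhalf]
      have hmem_x' : x' ∈ ball x ρ := by
        rw [mem_ball, dist_eq_norm, hx'x]; linarith only [hρ_pos]
      have hmem_u : uL ∈ A ∩ ball a ((α + 1/Real.sqrt ε)*ρ) := by
        refine ⟨huA, ?_⟩
        rw [mem_ball, dist_eq_norm, hM_def]
        linarith only [hu_cap, mul_pos hM_pos hρ_pos]
      have hmem_b : b ∈ B ∩ ball b ((α + 1/Real.sqrt ε)*ρ) :=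
        ⟨hbB, mem_ball_self (by positivity)⟩
      have htd : tripleDist (A ∩ ball a ((α + 1/Real.sqrt ε)*ρ))
          (B ∩ ball b ((α + 1/Real.sqrt ε)*ρ)) (ball x ρ) ≤ ENNReal.ofReal (r - α*ρ) := by
        unfold tripleDist
        refine le_trans (iInf₂_le x' hmem_x')
          (le_trans (iInf₂_le uL hmem_u) (le_trans (iInf₂_le b hmem_b) ?_))
        exact ENNReal.ofReal_le_ofReal (max_le hmaxu hmaxb)
      have hfinal := add_le_add_left htd (ENNReal.ofReal (α*ρ))
      rw [← ENNReal.ofReal_add hr_αρ (by positivity : (0:ℝ) ≤ α*ρ)] at hfinal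
      have he : r - α*ρ + α*ρ = r := by ring
      rw [he, ← hr_def] at hfinal
      exact hfinal
    · -- use the pair (a, vL) and move x towards a
      obtain ⟨x', hx'_def⟩ : ∃ y : X, x + (ρ/(2*r))•(a - x) = y := ⟨_, rfl⟩
      have hax : ‖a - x‖ = r := by rw [norm_sub_rev]; exact hr_def
      have hx'x : ‖x' - x‖ = ρ/2 := by
        have e : x' - x = (ρ/(2*r))•(a - x) := by rw [← hx'_def]; abel
        rw [e, norm_smul, Real.norm_eq_abs, abs_of_pos (by positivity), hax]
        field_simp
      have hx'a : ‖x' - a‖ = r - ρ/2 := by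
        have e : x' - a = (1 - ρ/(2*r))•(x - a) := by rw [← hx'_def]; module
        have hcoef : (0:ℝ) ≤ 1 - ρ/(2*r) := by
          rw [sub_nonneg, div_le_one (by positivity)]
          linarith only [hρr, hr_pos]
        rw [e, norm_smul, Real.norm_eq_abs, abs_of_nonneg hcoef, hr_def]
        field_simp
      have hmaxv : ‖x' - vL‖ ≤ r - α*ρ := by
        have htri : ‖x' - vL‖ ≤ ‖x' - x‖ + ‖x - vL‖ := by
          have h := norm_add_le (x' - x) (x - vL)
          rwa [sub_add_sub_cancel] at h
        rw [hx'x] at htri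
        linarith only [htri, hs, hαhalf, hρ_pos]
      have hmaxa : ‖x' - a‖ ≤ r - α*ρ := by rw [hx'a]; linarith only [hαhalf]
      have hmem_x' : x' ∈ ball x ρ := by
        rw [mem_ball, dist_eq_norm, hx'x]; linarith only [hρ_pos]
      have hmem_v : vL ∈ B ∩ ball b ((α + 1/Real.sqrt ε)*ρ) := by
        refine ⟨hvB, ?_⟩
        rw [mem_ball, dist_eq_norm, hM_def]
        linarith only [hv_cap, mul_pos hM_pos hρ_pos]
      have hmem_a : a ∈ A ∩ ball a ((α + 1/Real.sqrt ε)*ρ) :=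
        ⟨haA, mem_ball_self (by positivity)⟩
      have htd : tripleDist (A ∩ ball a ((α + 1/Real.sqrt ε)*ρ))
          (B ∩ ball b ((α + 1/Real.sqrt ε)*ρ)) (ball x ρ) ≤ ENNReal.ofReal (r - α*ρ) := by
        unfold tripleDist
        refine le_trans (iInf₂_le x' hmem_x')
          (le_trans (iInf₂_le a hmem_a) (le_trans (iInf₂_le vL hmem_v) ?_))
        exact ENNReal.ofReal_le_ofReal (max_le hmaxa hmaxv)
      have hfinal := add_le_add_left htd (ENNReal.ofReal (α*ρ))
      rw [← ENNReal.ofReal_add hr_αρ (by positivity : (0:ℝ) ≤ α*ρ)] at hfinal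
      have he : r - α*ρ + α*ρ = r := by ring
      rw [he, ← hr_def] at hfinal
      exact hfinal
end

section
/- Let A and B be closed subsets of a normed space X and let x̄ ∈ A ∩ B. Then the set-valued map H_{A,B} is metrically regular at the graph point ((x̄, x̄), 0) if and only if there exist K > 0 and δ > 0 such that d(x, (A − a) ∩ (B − b)) ≤ K(d(x, A − a) + d(x, B − b)) for all x ∈ B_δ(x̄) and all a, b ∈ B_δ(0). -/
open Metric Set
open scoped ENNReal

/-- The set-valued map `H_{A,B} : X × X ⇒ X`, `H_{A,B}(x₁,x₂) = {x₁ - x₂}` if `x₁ ∈ A`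
and `x₂ ∈ B`, and `∅` otherwise. -/
def Hmap {X : Type*} [NormedAddCommGroup X] (A B : Set X) (p : X × X) : Set X :=
  {v | p.1 ∈ A ∧ p.2 ∈ B ∧ v = p.1 - p.2}

/-- The distance (valued in `ℝ≥0∞`, `+∞` on the empty set) from a point of `X × X` to a
subset of `X × X`, where `X × X` carries the sum metric. -/
noncomputable def sumInfEdist {X : Type*} [NormedAddCommGroup X]
    (p : X × X) (S : Set (X × X)) : ℝ≥0∞ :=
  ⨅ q ∈ S, ENNReal.ofReal (‖p.1 - q.1‖ + ‖p.2 - q.2‖)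

lemma aux_infEdist_eq {X : Type*} [NormedAddCommGroup X] (x : X) (s : Set X) :
    EMetric.infEdist x s = Metric.infEDist x s := rfl

lemma aux_infEdist_image_sub {X : Type*} [NormedAddCommGroup X] (A : Set X) (x a : X) :
    EMetric.infEdist x ((· - a) '' A) = EMetric.infEdist (x + a) A := by
  have hiso : Isometry (fun z : X => z - a) :=
    Isometry.of_dist_eq fun b c => by simp [dist_eq_norm]
  have h : (fun z : X => z - a) (x + a) = x := by simp
  rw [aux_infEdist_eq, aux_infEdist_eq]
  conv_lhs => rw [← h, EMetric.infEdist_image hiso]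

lemma aux_le_ofReal_of_forall {a : ℝ≥0∞} {c : ℝ} (hc : 0 ≤ c)
    (h : ∀ e : ℝ, 0 < e → a ≤ ENNReal.ofReal (c + e)) : a ≤ ENNReal.ofReal c := by
  refine ENNReal.le_of_forall_pos_le_add fun ε hε _ => ?_
  have h2 := h (ε : ℝ) (by exact_mod_cast hε)
  rwa [ENNReal.ofReal_add hc (by positivity), ENNReal.ofReal_coe_nnreal] at h2

lemma aux_ofReal_infDist {X : Type*} [NormedAddCommGroup X] {A : Set X} (hA : A.Nonempty)
    (x : X) : EMetric.infEdist x A = ENNReal.ofReal (Metric.infDist x A) := by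
  rw [aux_infEdist_eq, Metric.infDist, ENNReal.ofReal_toReal (Metric.infEdist_ne_top hA)]

theorem stmt16 {X : Type*} [NormedAddCommGroup X] [NormedSpace ℝ X]
    {A B : Set X} (hA : IsClosed A) (hB : IsClosed B) {xbar : X} (hx : xbar ∈ A ∩ B) :
    -- metric regularity of `H_{A,B}` at `((x̄, x̄), 0)`, with the sum metric on `X × X`
    (∃ K > 0, ∃ δ > 0, ∀ p : X × X, ‖p.1 - xbar‖ + ‖p.2 - xbar‖ < δ →
        ∀ y : X, ‖y - 0‖ < δ →
          sumInfEdist p {q | y ∈ Hmap A B q} ≤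
            ENNReal.ofReal K * EMetric.infEdist y (Hmap A B p)) ↔
    (∃ K > 0, ∃ δ > 0, ∀ a ∈ Metric.ball (0 : X) δ, ∀ b ∈ Metric.ball (0 : X) δ,
        ∀ x ∈ Metric.ball xbar δ,
          EMetric.infEdist x (((· - a) '' A) ∩ ((· - b) '' B)) ≤
            ENNReal.ofReal K *
              (EMetric.infEdist x ((· - a) '' A) + EMetric.infEdist x ((· - b) '' B))) := by
  obtain ⟨hxA, hxB⟩ := hx
  constructor
  · rintro ⟨K, hK, δ, hδ, hMR⟩
    refine ⟨K + 1, by linarith, δ / 20, by linarith, ?_⟩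
    intro a ha b hb x hxx
    rw [mem_ball, dist_zero_right] at ha hb
    rw [mem_ball, dist_eq_norm] at hxx
    set rA := Metric.infDist (x + a) A with hrA
    set rB := Metric.infDist (x + b) B with hrB
    have hrA0 : 0 ≤ rA := Metric.infDist_nonneg
    have hrB0 : 0 ≤ rB := Metric.infDist_nonneg
    have hrAs : rA < 2 * (δ / 20) := by
      calc rA ≤ dist (x + a) xbar := Metric.infDist_le_dist_of_mem hxA
        _ = ‖x - xbar + a‖ := by rw [dist_eq_norm]; congr 1; abel
        _ ≤ ‖x - xbar‖ + ‖a‖ := norm_add_le _ _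
        _ < 2 * (δ / 20) := by linarith
    have hrBs : rB < 2 * (δ / 20) := by
      calc rB ≤ dist (x + b) xbar := Metric.infDist_le_dist_of_mem hxB
        _ = ‖x - xbar + b‖ := by rw [dist_eq_norm]; congr 1; abel
        _ ≤ ‖x - xbar‖ + ‖b‖ := norm_add_le _ _
        _ < 2 * (δ / 20) := by linarith
    rw [aux_infEdist_image_sub A x a, aux_infEdist_image_sub B x b,
      aux_ofReal_infDist ⟨xbar, hxA⟩, aux_ofReal_infDist ⟨xbar, hxB⟩, ← hrA, ← hrB,
      ← ENNReal.ofReal_add hrA0 hrB0, ← ENNReal.ofReal_mul (by linarith)]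
    refine aux_le_ofReal_of_forall (by positivity) fun e he => ?_
    set m := min (e / (2 * K + 2)) (δ / 20) with hm
    have hm0 : 0 < m := lt_min (by positivity) (by linarith)
    have hmδ : m ≤ δ / 20 := min_le_right _ _
    have hme : (2 * K + 2) * m ≤ e := by
      have : m ≤ e / (2 * K + 2) := min_le_left _ _
      calc (2 * K + 2) * m ≤ (2 * K + 2) * (e / (2 * K + 2)) := by
            apply mul_le_mul_of_nonneg_left this; linarith
        _ = e := by field_simp
    -- choose near points u₀ ∈ A and v₀ ∈ B
    obtain ⟨u, huA, hu⟩ := (Metric.infDist_lt_iff ⟨xbar, hxA⟩).mp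
      (show rA < rA + m by linarith)
    obtain ⟨v, hvB, hv⟩ := (Metric.infDist_lt_iff ⟨xbar, hxB⟩).mp
      (show rB < rB + m by linarith)
    rw [dist_eq_norm] at hu hv
    -- the residual
    set r := ‖(a - b) - (u - v)‖ with hr
    have hr0 : 0 ≤ r := norm_nonneg _
    have hrle : r ≤ rA + rB + 2 * m := by
      calc r = ‖(x + a - u) + -(x + b - v)‖ := by rw [hr]; congr 1; abel
        _ ≤ ‖x + a - u‖ + ‖-(x + b - v)‖ := norm_add_le _ _
        _ = ‖x + a - u‖ + ‖x + b - v‖ := by rw [norm_neg]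
        _ ≤ (rA + m) + (rB + m) := by linarith
        _ = rA + rB + 2 * m := by ring
    -- apply metric regularity at p = (u, v), y = a - b
    have hp1 : ‖u - xbar‖ + ‖v - xbar‖ < δ := by
      have h1 : ‖u - xbar‖ ≤ ‖x + a - u‖ + (‖x - xbar‖ + ‖a‖) := by
        calc ‖u - xbar‖ = ‖-(x + a - u) + (x - xbar + a)‖ := by congr 1; abel
          _ ≤ ‖-(x + a - u)‖ + ‖x - xbar + a‖ := norm_add_le _ _
          _ ≤ ‖x + a - u‖ + (‖x - xbar‖ + ‖a‖) := by
              rw [norm_neg]; exact add_le_add le_rfl (norm_add_le _ _)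
      have h2 : ‖v - xbar‖ ≤ ‖x + b - v‖ + (‖x - xbar‖ + ‖b‖) := by
        calc ‖v - xbar‖ = ‖-(x + b - v) + (x - xbar + b)‖ := by congr 1; abel
          _ ≤ ‖-(x + b - v)‖ + ‖x - xbar + b‖ := norm_add_le _ _
          _ ≤ ‖x + b - v‖ + (‖x - xbar‖ + ‖b‖) := by
              rw [norm_neg]; exact add_le_add le_rfl (norm_add_le _ _)
      have : ‖x + a - u‖ < rA + m := hu
      have : ‖x + b - v‖ < rB + m := hv
      -- rA + m < 3δ/20, so ‖u - xbar‖ < 3δ/20 + 2δ/20 = δ/4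
      linarith
    have hy1 : ‖(a - b) - 0‖ < δ := by
      rw [sub_zero]
      calc ‖a - b‖ ≤ ‖a‖ + ‖b‖ := norm_sub_le _ _
        _ < δ := by linarith
    have hHuv : Hmap A B (u, v) = {u - v} := by
      ext w; simp [Hmap, huA, hvB, eq_comm]
    have hMRa := hMR (u, v) hp1 (a - b) hy1
    rw [hHuv, aux_infEdist_eq, EMetric.infEdist_singleton, edist_dist, dist_eq_norm, ← hr,
      ← ENNReal.ofReal_mul hK.le] at hMRa
    -- extract a point of H⁻¹(a-b) close to (u,v)
    have hlt : sumInfEdist (u, v) {q | (a - b) ∈ Hmap A B q} < ENNReal.ofReal (K * r + m) :=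
      lt_of_le_of_lt hMRa (by
        rw [ENNReal.ofReal_lt_ofReal_iff (by positivity)]
        have : 0 ≤ K * r := by positivity
        linarith)
    rw [sumInfEdist] at hlt
    rw [iInf_lt_iff] at hlt
    obtain ⟨q, hq⟩ := hlt
    rw [iInf_lt_iff] at hq
    obtain ⟨hqS, hq⟩ := hq
    obtain ⟨hq1A, hq2B, hqeq⟩ : q.1 ∈ A ∧ q.2 ∈ B ∧ a - b = q.1 - q.2 := hqS
    have hqd : ‖u - q.1‖ + ‖v - q.2‖ < K * r + m :=
      (ENNReal.ofReal_lt_ofReal_iff (by positivity)).mp hq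
    -- the point w := q.1 - a lies in the intersection
    have hwA : q.1 - a ∈ (· - a) '' A := ⟨q.1, hq1A, rfl⟩
    have hwB : q.1 - a ∈ (· - b) '' B := ⟨q.2, hq2B, by
      show q.2 - b = q.1 - a
      have h2 : q.2 - b - (q.1 - a) = (a - b) - (q.1 - q.2) := by abel
      rw [hqeq, sub_self] at h2
      exact sub_eq_zero.mp h2⟩
    have hdw : dist x (q.1 - a) < (K + 1) * (rA + rB) + e := by
      rw [dist_eq_norm]
      have h3 : ‖x - (q.1 - a)‖ ≤ ‖x + a - u‖ + ‖u - q.1‖ := by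
        calc ‖x - (q.1 - a)‖ = ‖(x + a - u) + (u - q.1)‖ := by congr 1; abel
          _ ≤ ‖x + a - u‖ + ‖u - q.1‖ := norm_add_le _ _
      have h4 : ‖u - q.1‖ ≤ ‖u - q.1‖ + ‖v - q.2‖ := by
        have := norm_nonneg (v - q.2); linarith
      have h5 : K * r ≤ K * (rA + rB + 2 * m) := by
        apply mul_le_mul_of_nonneg_left hrle hK.le
      nlinarith [norm_nonneg (v - q.2)]
    calc EMetric.infEdist x (((· - a) '' A) ∩ ((· - b) '' B))
        ≤ edist x (q.1 - a) := EMetric.infEdist_le_edist_of_mem ⟨hwA, hwB⟩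
      _ = ENNReal.ofReal (dist x (q.1 - a)) := edist_dist _ _
      _ ≤ ENNReal.ofReal ((K + 1) * (rA + rB) + e) := ENNReal.ofReal_le_ofReal hdw.le
  · rintro ⟨K, hK, δ, hδ, hI⟩
    refine ⟨2 * K + 1, by linarith, δ / 4, by linarith, ?_⟩
    intro p hp y hy
    rw [sub_zero] at hy
    by_cases hmem : p.1 ∈ A ∧ p.2 ∈ B
    · obtain ⟨hp1A, hp2B⟩ := hmem
      set r := ‖y - (p.1 - p.2)‖ with hrdef
      have hr0 : 0 ≤ r := norm_nonneg _
      have hH : Hmap A B p = {p.1 - p.2} := by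
        ext w; simp [Hmap, hp1A, hp2B, eq_comm]
      rw [hH, aux_infEdist_eq, EMetric.infEdist_singleton, edist_dist, dist_eq_norm, ← hrdef,
        ← ENNReal.ofReal_mul (by linarith)]
      refine aux_le_ofReal_of_forall (by positivity) fun e he => ?_
      -- apply the intersection property with a = 0, b = -y, x = p.1
      have hIa := hI 0 (Metric.mem_ball_self hδ) (-y)
        (by rw [mem_ball, dist_zero_right, norm_neg]; linarith) p.1
        (by rw [mem_ball, dist_eq_norm]; linarith [hp, norm_nonneg (p.2 - xbar)])
      have him0 : ((· - (0 : X)) '' A) = A := by simp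
      have hA0 : EMetric.infEdist p.1 ((· - (0 : X)) '' A) = 0 := by
        rw [him0]; exact EMetric.infEdist_zero_of_mem hp1A
      have hBy : EMetric.infEdist p.1 ((· - (-y)) '' B) ≤ ENNReal.ofReal r := by
        rw [aux_infEdist_image_sub]
        calc EMetric.infEdist (p.1 + -y) B ≤ edist (p.1 + -y) p.2 :=
              EMetric.infEdist_le_edist_of_mem hp2B
          _ = ENNReal.ofReal ‖p.1 + -y - p.2‖ := by rw [edist_dist, dist_eq_norm]
          _ = ENNReal.ofReal r := by
              rw [hrdef]
              congr 1
              rw [show p.1 + -y - p.2 = -(y - (p.1 - p.2)) by abel, norm_neg]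
      have hKey : EMetric.infEdist p.1 (((· - (0 : X)) '' A) ∩ ((· - (-y)) '' B)) ≤
          ENNReal.ofReal (K * r) := by
        calc EMetric.infEdist p.1 (((· - (0 : X)) '' A) ∩ ((· - (-y)) '' B))
            ≤ ENNReal.ofReal K * (EMetric.infEdist p.1 ((· - (0 : X)) '' A) +
              EMetric.infEdist p.1 ((· - (-y)) '' B)) := hIa
          _ ≤ ENNReal.ofReal K * (0 + ENNReal.ofReal r) :=
              mul_le_mul_right (add_le_add (le_of_eq hA0) hBy) _
          _ = ENNReal.ofReal (K * r) := by rw [zero_add, ← ENNReal.ofReal_mul hK.le]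
      have hlt : EMetric.infEdist p.1 (((· - (0 : X)) '' A) ∩ ((· - (-y)) '' B)) <
          ENNReal.ofReal (K * r + e / 2) :=
        lt_of_le_of_lt hKey (by
          rw [ENNReal.ofReal_lt_ofReal_iff (by positivity)]; linarith)
      obtain ⟨w, ⟨hwA, hwB⟩, hwd⟩ := EMetric.infEdist_lt_iff.mp hlt
      rw [edist_dist, ENNReal.ofReal_lt_ofReal_iff (by positivity), dist_eq_norm] at hwd
      -- w ∈ A and w - y ∈ B
      rw [him0] at hwA
      obtain ⟨z, hzB, hzw⟩ := hwB
      have hwyB : w - y ∈ B := by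
        have hz : z = w - y := by rw [← hzw]; simp only [sub_neg_eq_add, add_sub_cancel_right]
        rwa [← hz]
      have hqS : (w, w - y) ∈ {q : X × X | y ∈ Hmap A B q} := by
        refine ⟨hwA, hwyB, ?_⟩
        exact (sub_sub_cancel w y).symm
      have hbound : ‖p.1 - w‖ + ‖p.2 - (w - y)‖ ≤ (2 * K + 1) * r + e := by
        have h6 : ‖p.2 - (w - y)‖ ≤ r + ‖p.1 - w‖ := by
          calc ‖p.2 - (w - y)‖ = ‖(y - (p.1 - p.2)) + (p.1 - w)‖ := by congr 1; abel
            _ ≤ ‖y - (p.1 - p.2)‖ + ‖p.1 - w‖ := norm_add_le _ _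
            _ = r + ‖p.1 - w‖ := by rw [← hrdef]
        nlinarith
      calc sumInfEdist p {q | y ∈ Hmap A B q}
          ≤ ENNReal.ofReal (‖p.1 - (w, w - y).1‖ + ‖p.2 - (w, w - y).2‖) := iInf₂_le _ hqS
        _ ≤ ENNReal.ofReal ((2 * K + 1) * r + e) := ENNReal.ofReal_le_ofReal hbound
    · have hH : Hmap A B p = ∅ := by
        ext w; simp only [Hmap, mem_setOf_eq, mem_empty_iff_false, iff_false]
        intro h; exact hmem ⟨h.1, h.2.1⟩
      rw [hH, aux_infEdist_eq, EMetric.infEdist_empty, ENNReal.mul_top (by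
        simp only [ne_eq, ENNReal.ofReal_eq_zero, not_le]; linarith)]
      exact le_top
end

section
/- Let A and B be closed subsets of a Banach space X and let x̄ ∈ A ∩ B. Then the set-valued map H_{A,B} is metrically subregular at the graph point ((x̄, x̄), 0) if and only if there exist K > 0 and δ > 0 such that d(x, A ∩ B) ≤ K(d(x, A) + d(x, B)) for all x ∈ B_δ(x̄). -/
open Metric Set
open scoped ENNReal

lemma infEdist_eq_ofReal_infDist' {X : Type*} [PseudoMetricSpace X] {s : Set X}
    (hs : s.Nonempty) (x : X) :
    EMetric.infEdist x s = ENNReal.ofReal (Metric.infDist x s) := by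
  rw [EMetric.infEdist, Metric.infDist, ENNReal.ofReal_toReal (Metric.infEdist_ne_top hs)]

lemma zero_mem_Hmap_iff {X : Type*} [NormedAddCommGroup X] {A B : Set X} {q : X × X} :
    (0 : X) ∈ Hmap A B q ↔ q.1 ∈ A ∧ q.2 ∈ B ∧ q.1 = q.2 := by
  simp only [Hmap, mem_setOf_eq, eq_comm (a := (0 : X)), sub_eq_zero]

lemma sumInfEdist_le' {X : Type*} [NormedAddCommGroup X] {A B : Set X} {c : X}
    (hcA : c ∈ A) (hcB : c ∈ B) (p : X × X) :
    sumInfEdist p {q | (0 : X) ∈ Hmap A B q} ≤ ENNReal.ofReal (‖p.1 - c‖ + ‖p.2 - c‖) := by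
  have hmem : ((c, c) : X × X) ∈ {q | (0 : X) ∈ Hmap A B q} := by
    simp [zero_mem_Hmap_iff, hcA, hcB]
  exact biInf_le _ hmem

lemma sumInfEdist_extract {X : Type*} [NormedAddCommGroup X] {A B : Set X} {p : X × X}
    {r : ℝ≥0∞} (h : sumInfEdist p {q | (0 : X) ∈ Hmap A B q} < r) :
    ∃ c ∈ A ∩ B, ENNReal.ofReal (‖p.1 - c‖ + ‖p.2 - c‖) < r := by
  rw [sumInfEdist] at h
  simp only [iInf_lt_iff] at h
  obtain ⟨q, hq, hlt⟩ := h
  rw [mem_setOf_eq, zero_mem_Hmap_iff] at hq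
  obtain ⟨hq1, hq2, hq12⟩ := hq
  exact ⟨q.1, ⟨hq1, hq12 ▸ hq2⟩, by rw [hq12] at hlt ⊢; exact hlt⟩

theorem stmt17 {X : Type*} [NormedAddCommGroup X] [NormedSpace ℝ X] [CompleteSpace X]
    {A B : Set X} (hA : IsClosed A) (hB : IsClosed B) {xbar : X} (hx : xbar ∈ A ∩ B) :
    -- metric subregularity of `H_{A,B}` at `((x̄, x̄), 0)`, with the sum metric on `X × X`
    (∃ K > 0, ∃ δ > 0, ∀ p : X × X, ‖p.1 - xbar‖ + ‖p.2 - xbar‖ < δ →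
        sumInfEdist p {q | (0 : X) ∈ Hmap A B q} ≤
          ENNReal.ofReal K * EMetric.infEdist (0 : X) (Hmap A B p)) ↔
    (∃ K > 0, ∃ δ > 0, ∀ x ∈ Metric.ball xbar δ,
        EMetric.infEdist x (A ∩ B) ≤
          ENNReal.ofReal K * (EMetric.infEdist x A + EMetric.infEdist x B)) := by
  have hAne : A.Nonempty := ⟨xbar, hx.1⟩
  have hBne : B.Nonempty := ⟨xbar, hx.2⟩
  have hABne : (A ∩ B).Nonempty := ⟨xbar, hx⟩
  constructor
  · rintro ⟨K, hK, δ, hδ, h⟩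
    refine ⟨K + 1, by linarith, δ / 5, by linarith, ?_⟩
    intro x hxball
    rw [infEdist_eq_ofReal_infDist' hABne, infEdist_eq_ofReal_infDist' hAne,
      infEdist_eq_ofReal_infDist' hBne,
      ← ENNReal.ofReal_add Metric.infDist_nonneg Metric.infDist_nonneg,
      ← ENNReal.ofReal_mul (by linarith)]
    apply ENNReal.ofReal_le_ofReal
    set dA := Metric.infDist x A with hdA
    set dB := Metric.infDist x B with hdB
    have hdA0 : 0 ≤ dA := Metric.infDist_nonneg
    have hdB0 : 0 ≤ dB := Metric.infDist_nonneg
    apply le_of_forall_pos_le_add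
    intro ε hε
    have hη0 : 0 < min (δ / 10) (ε / (2 * K + 2)) := by
      apply lt_min <;> positivity
    set η := min (δ / 10) (ε / (2 * K + 2)) with hηdef
    have hηδ : η ≤ δ / 10 := min_le_left _ _
    have hηε : (2 * K + 2) * η ≤ ε := by
      have := min_le_right (δ / 10) (ε / (2 * K + 2))
      calc (2 * K + 2) * η ≤ (2 * K + 2) * (ε / (2 * K + 2)) := by
            apply mul_le_mul_of_nonneg_left this (by linarith)
        _ = ε := by field_simp
    obtain ⟨a, haA, hxa⟩ := (Metric.infDist_lt_iff hAne).mp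
      (lt_add_of_pos_right dA hη0)
    obtain ⟨b, hbB, hxb⟩ := (Metric.infDist_lt_iff hBne).mp
      (lt_add_of_pos_right dB hη0)
    rw [dist_eq_norm] at hxa hxb
    have hxbar : ‖x - xbar‖ < δ / 5 := by
      rw [Metric.mem_ball, dist_eq_norm] at hxball; exact hxball
    have hdAx : dA ≤ ‖x - xbar‖ := by
      simpa [dist_eq_norm] using Metric.infDist_le_dist_of_mem hx.1
    have hdBx : dB ≤ ‖x - xbar‖ := by
      simpa [dist_eq_norm] using Metric.infDist_le_dist_of_mem hx.2
    have htri_a : ‖a - xbar‖ ≤ ‖x - a‖ + ‖x - xbar‖ := by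
      have := dist_triangle a x xbar
      rw [dist_eq_norm, dist_eq_norm, dist_eq_norm, norm_sub_rev a x] at this
      linarith
    have htri_b : ‖b - xbar‖ ≤ ‖x - b‖ + ‖x - xbar‖ := by
      have := dist_triangle b x xbar
      rw [dist_eq_norm, dist_eq_norm, dist_eq_norm, norm_sub_rev b x] at this
      linarith
    have hpnear : ‖(a, b).1 - xbar‖ + ‖(a, b).2 - xbar‖ < δ := by
      simp only
      have : ‖x - a‖ < dA + η := hxa
      nlinarith
    have hsub := h (a, b) hpnear
    have hHab : Hmap A B (a, b) = {a - b} := by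
      ext v; simp [Hmap, haA, hbB]
    rw [hHab, EMetric.infEdist, Metric.infEDist_singleton] at hsub
    have hedist : edist (0 : X) (a - b) = ENNReal.ofReal ‖a - b‖ := by
      rw [edist_dist, dist_zero_left]
    rw [hedist, ← ENNReal.ofReal_mul hK.le] at hsub
    have hlt : sumInfEdist (a, b) {q | (0 : X) ∈ Hmap A B q} <
        ENNReal.ofReal (K * ‖a - b‖ + η) := by
      refine lt_of_le_of_lt hsub ?_
      apply (ENNReal.ofReal_lt_ofReal_iff (by nlinarith [norm_nonneg (a - b)])).mpr
      linarith
    obtain ⟨c, hcAB, hclt⟩ := sumInfEdist_extract hlt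
    have hclt' : ‖a - c‖ + ‖b - c‖ < K * ‖a - b‖ + η := by
      by_contra hcon
      push_neg at hcon
      exact absurd hclt (not_lt.mpr (ENNReal.ofReal_le_ofReal hcon))
    have h5 : Metric.infDist x (A ∩ B) ≤ ‖x - a‖ + ‖a - c‖ := by
      have h51 : Metric.infDist x (A ∩ B) ≤ dist x c :=
        Metric.infDist_le_dist_of_mem hcAB
      have h52 : dist x c ≤ ‖x - a‖ + ‖a - c‖ := by
        calc dist x c ≤ dist x a + dist a c := dist_triangle x a c
          _ = ‖x - a‖ + ‖a - c‖ := by rw [dist_eq_norm, dist_eq_norm]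
      linarith
    have h4 : ‖a - b‖ ≤ ‖x - a‖ + ‖x - b‖ := by
      have := norm_sub_le (x - b) (x - a)
      calc ‖a - b‖ = ‖(x - b) - (x - a)‖ := by rw [sub_sub_sub_cancel_left]
        _ ≤ ‖x - b‖ + ‖x - a‖ := norm_sub_le _ _
        _ = ‖x - a‖ + ‖x - b‖ := by ring
    have h7 : K * ‖a - b‖ ≤ K * (‖x - a‖ + ‖x - b‖) :=
      mul_le_mul_of_nonneg_left h4 hK.le
    have h8 : K * (‖x - a‖ + ‖x - b‖) ≤ K * ((dA + η) + (dB + η)) :=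
      mul_le_mul_of_nonneg_left (by linarith) hK.le
    have h9 : ‖a - c‖ ≤ K * ‖a - b‖ + η := by linarith [norm_nonneg (b - c)]
    nlinarith [h5, h7, h8, h9, hηε, hdB0, hxa]
  · rintro ⟨K, hK, δ, hδ, h⟩
    refine ⟨2 * K + 1, by linarith, δ, hδ, ?_⟩
    intro p hpnear
    by_cases hmem : p.1 ∈ A ∧ p.2 ∈ B
    · obtain ⟨h1, h2⟩ := hmem
      have hH : Hmap A B p = {p.1 - p.2} := by
        ext v; simp [Hmap, h1, h2]
      rw [hH, EMetric.infEdist, Metric.infEDist_singleton]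
      have hedist : edist (0 : X) (p.1 - p.2) = ENNReal.ofReal ‖p.1 - p.2‖ := by
        rw [edist_dist, dist_zero_left]
      rw [hedist, ← ENNReal.ofReal_mul (by linarith)]
      have hball : p.1 ∈ Metric.ball xbar δ := by
        rw [Metric.mem_ball, dist_eq_norm]
        have := norm_nonneg (p.2 - xbar)
        linarith
      have h0 := h p.1 hball
      rw [EMetric.infEdist, Metric.infEDist_zero_of_mem h1, zero_add] at h0
      have hEB : EMetric.infEdist p.1 B ≤ edist p.1 p.2 :=
        EMetric.infEdist_le_edist_of_mem h2
      have hd : EMetric.infEdist p.1 (A ∩ B) ≤ ENNReal.ofReal (K * ‖p.1 - p.2‖) := by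
        calc EMetric.infEdist p.1 (A ∩ B)
            ≤ ENNReal.ofReal K * EMetric.infEdist p.1 B := h0
          _ ≤ ENNReal.ofReal K * edist p.1 p.2 :=
              mul_le_mul_right hEB _
          _ = ENNReal.ofReal (K * ‖p.1 - p.2‖) := by
              rw [edist_dist, dist_eq_norm, ← ENNReal.ofReal_mul hK.le]
      have hdr : Metric.infDist p.1 (A ∩ B) ≤ K * ‖p.1 - p.2‖ := by
        rw [infEdist_eq_ofReal_infDist' hABne] at hd
        exact (ENNReal.ofReal_le_ofReal_iff (by positivity)).mp hd
      apply ENNReal.le_of_forall_pos_le_add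
      intro ε hε _
      have hε2 : (0 : ℝ) < (ε : ℝ) / 2 := by positivity
      obtain ⟨c, hcAB, hxc⟩ := (Metric.infDist_lt_iff hABne).mp
        (lt_add_of_pos_right (Metric.infDist p.1 (A ∩ B)) hε2)
      rw [dist_eq_norm] at hxc
      have htri : ‖p.2 - c‖ ≤ ‖p.1 - p.2‖ + ‖p.1 - c‖ := by
        calc ‖p.2 - c‖ = ‖(p.1 - c) - (p.1 - p.2)‖ := by rw [sub_sub_sub_cancel_left]
          _ ≤ ‖p.1 - c‖ + ‖p.1 - p.2‖ := norm_sub_le _ _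
          _ = ‖p.1 - p.2‖ + ‖p.1 - c‖ := by ring
      calc sumInfEdist p {q | (0 : X) ∈ Hmap A B q}
          ≤ ENNReal.ofReal (‖p.1 - c‖ + ‖p.2 - c‖) := sumInfEdist_le' hcAB.1 hcAB.2 p
        _ ≤ ENNReal.ofReal ((2 * K + 1) * ‖p.1 - p.2‖ + (ε : ℝ)) := by
            apply ENNReal.ofReal_le_ofReal; linarith
        _ = ENNReal.ofReal ((2 * K + 1) * ‖p.1 - p.2‖) + (ε : ℝ≥0∞) := by
            rw [ENNReal.ofReal_add (by positivity) ε.coe_nonneg,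
              ENNReal.ofReal_coe_nnreal]
    · have hH : Hmap A B p = ∅ := by
        ext v
        simp only [Hmap, mem_setOf_eq, mem_empty_iff_false, iff_false]
        tauto
      rw [hH, EMetric.infEdist, Metric.infEDist_empty, ENNReal.mul_top
        (by simp [ENNReal.ofReal_eq_zero]; linarith)]
      exact le_top
end

section
/- Let A and B be closed subsets of a Banach space X and let x̄ ∈ A ∩ B. Then A and B are transversal at x̄ if and only if there exist K > 0 and δ > 0 such that d(x, A ∩ (B − b)) ≤ K(d(x, A) + d(x, B − b)) for all x ∈ B_δ(x̄) and all b ∈ B_δ(0) (i.e., in the defining inequality of transversality only one of the sets needs to be translated). -/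
open Metric Set
open scoped ENNReal

private lemma isom_sub {X : Type*} [NormedAddCommGroup X] (a : X) :
    Isometry (fun x : X => x - a) := fun x y => by simp [edist_sub_right]

private lemma img_sub {X : Type*} [NormedAddCommGroup X] (a : X) (x : X) (S : Set X) :
    EMetric.infEdist x ((· - a) '' S) = EMetric.infEdist (x + a) S := by
  unfold EMetric.infEdist
  rw [← EMetric.infEdist_image (isom_sub a) (x := x + a) (t := S)]
  simp only [add_sub_cancel_right]

private lemma inter_sub {X : Type*} [NormedAddCommGroup X] (a b : X) (A B : Set X) :
    ((· - a) '' A) ∩ ((· - b) '' B) = (· - a) '' (A ∩ ((· - (b - a)) '' B)) := by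
  ext u
  simp only [Set.mem_inter_iff, Set.mem_image]
  constructor
  · rintro ⟨⟨v, hv, rfl⟩, w, hw, hwb⟩
    refine ⟨v, ⟨hv, w, hw, ?_⟩, rfl⟩
    show w - (b - a) = v
    rw [show w - (b - a) = (w - b) + a from by abel, show w - b = v - a from hwb]
    abel
  · rintro ⟨v, ⟨hv, w, hw, hwv⟩, rfl⟩
    refine ⟨⟨v, hv, rfl⟩, w, hw, ?_⟩
    show w - b = v - a
    rw [← show w - (b - a) = v from hwv]
    abel

theorem stmt18 {X : Type*} [NormedAddCommGroup X] [NormedSpace ℝ X] [CompleteSpace X]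
    {A B : Set X} (hA : IsClosed A) (hB : IsClosed B) {xbar : X} (hx : xbar ∈ A ∩ B) :
    Transversal A B xbar ↔
      ∃ K > 0, ∃ δ > 0, ∀ b ∈ Metric.ball (0 : X) δ, ∀ x ∈ Metric.ball xbar δ,
        EMetric.infEdist x (A ∩ ((· - b) '' B)) ≤
          ENNReal.ofReal K * (EMetric.infEdist x A + EMetric.infEdist x ((· - b) '' B)) := by
  constructor
  · rintro ⟨K, hK, δ, hδ, h⟩
    refine ⟨K, hK, δ, hδ, fun b hb x hxm => ?_⟩
    have := h 0 (by simpa using hδ) b hb x hxm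
    simpa using this
  · rintro ⟨K, hK, δ, hδ, h⟩
    refine ⟨K, hK, δ / 2, by linarith, fun a ha b hb x hxm => ?_⟩
    have hba : b - a ∈ Metric.ball (0 : X) δ := by
      rw [mem_ball_zero_iff] at *
      calc ‖b - a‖ ≤ ‖b‖ + ‖a‖ := norm_sub_le _ _
        _ < δ := by linarith [ha, hb]
    have hxa : x + a ∈ Metric.ball xbar δ := by
      rw [mem_ball] at hxm ⊢
      rw [mem_ball_zero_iff] at ha
      calc dist (x + a) xbar ≤ dist (x + a) x + dist x xbar := dist_triangle _ _ _
        _ < δ := by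
          have h3 : dist (x + a) x = ‖a‖ := by simp [dist_eq_norm]
          rw [h3]; linarith
    have key := h (b - a) hba (x + a) hxa
    rw [inter_sub a b A B, img_sub a x, img_sub a x A]
    have : (· - b) '' B = (· - a) '' ((· - (b - a)) '' B) := by
      rw [Set.image_image]
      exact Set.image_congr' (fun w => by abel)
    rw [this, img_sub a x]
    exact key
end
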